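/- arXiv:1810.08057 — 5 statements merged into one kernel-verified Lean document; each statement's English description precedes it below -/
import Mathlib

section
/- Let S ⊆ ℝ² be a compact set with path-connected boundary satisfying S = closure(interior(S)). If S is biconvex with respect to orthogonal unit vectors b₁, b₂, then S is a π/2-lighthouse with axes ξ, Rξ, R²ξ, R³ξ where ξ = (b₁+b₂)/‖b₁+b₂‖ and R is counter-clockwise rotation by π/2: for every x ∈ ∂S there exists i ∈ {0,1,2,3} such that the open infinite cone with vertex x, axis Rⁱξ and opening angle π/2 is contained in the complement of S. -/
noncomputable section

open Set Metric MeasureTheory Filter Real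
open scoped RealInnerProductSpace Topology symmDiff

/-- The Euclidean plane. -/
abbrev E2 : Type := EuclideanSpace ℝ (Fin 2)

/-- The line through `p` in direction `v`. -/
def lineThru (p v : E2) : Set E2 := {x | ∃ t : ℝ, x = p + t • v}

/-- `S` is biconvex with respect to the directions `b₁, b₂`: every section of `S`
along a line in direction `b₁` or `b₂` is convex. -/
def Biconvex (b₁ b₂ : E2) (S : Set E2) : Prop :=
  ∀ p : E2, Convex ℝ (lineThru p b₁ ∩ S) ∧ Convex ℝ (lineThru p b₂ ∩ S)

/-- Open quadrant-cone with vertex `y` and sides in the directions `u, v`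
(an open cone of opening angle `π/2` when `u ⊥ v`). -/
def Quadrant (y u v : E2) : Set E2 :=
  {x | ∃ s t : ℝ, 0 < s ∧ 0 < t ∧ x = y + s • u + t • v}

/-- The four open quadrant-cones at `y` with sides parallel to `b₁, b₂`
(axes `ξ, Rξ, R²ξ, R³ξ` with `ξ = (b₁+b₂)/‖b₁+b₂‖`). -/
def QuadrantCones (b₁ b₂ y : E2) : Set (Set E2) :=
  {Quadrant y b₁ b₂, Quadrant y (-b₁) b₂, Quadrant y b₁ (-b₂), Quadrant y (-b₁) (-b₂)}

/-- First canonical axis rotated counter-clockwise by `θ`. -/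
def bvec1 (θ : ℝ) : E2 := (WithLp.equiv 2 (Fin 2 → ℝ)).symm ![Real.cos θ, Real.sin θ]

/-- Second canonical axis rotated counter-clockwise by `θ`. -/
def bvec2 (θ : ℝ) : E2 := (WithLp.equiv 2 (Fin 2 → ℝ)).symm ![-Real.sin θ, Real.cos θ]

/-- `S` is `θ`-biconvex. -/
def ThetaBiconvex (θ : ℝ) (S : Set E2) : Prop := Biconvex (bvec1 θ) (bvec2 θ) S

/-- The `θ`-biconvex hull: intersection of the complements of all open quadrant-cones
(with sides parallel to the `θ`-rotated axes) that do not meet `A`. -/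
def BHull (θ : ℝ) (A : Set E2) : Set E2 :=
  ⋂₀ {T | ∃ y C, C ∈ QuadrantCones (bvec1 θ) (bvec2 θ) y ∧ C ∩ A = ∅ ∧ T = Cᶜ}

/-- Erosion `A ⊖ B(0,r)`. -/
def Erosion (A : Set E2) (r : ℝ) : Set E2 :=
  ⋃ x ∈ {x : E2 | closedBall x r ⊆ A}, closedBall x r

set_option maxHeartbeats 1000000

/-- a compact regular biconvex set is a `π/2`-lighthouse with the
four diagonal axes: every boundary point has an empty open quadrant-cone. -/
theorem biconvex_lighthouse (S : Set E2) (hScomp : IsCompact S)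
    (hbd : IsPathConnected (frontier S)) (hreg : S = closure (interior S))
    (b₁ b₂ : E2) (hb₁ : ‖b₁‖ = 1) (hb₂ : ‖b₂‖ = 1) (horth : ⟪b₁, b₂⟫ = 0)
    (hbc : Biconvex b₁ b₂ S) :
    ∀ x ∈ frontier S, ∃ C ∈ QuadrantCones b₁ b₂ x, C ⊆ Sᶜ := by
  intro x hx
  by_contra hcon
  push_neg at hcon
  have hS_closed : IsClosed S := hScomp.isClosed
  have hfsub : frontier S ⊆ S := by
    rw [hS_closed.frontier_eq]; exact diff_subset
  -- basic inner product facts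
  have hb11 : ⟪b₁, b₁⟫ = 1 := by rw [real_inner_self_eq_norm_mul_norm, hb₁]; ring
  have hb22 : ⟪b₂, b₂⟫ = 1 := by rw [real_inner_self_eq_norm_mul_norm, hb₂]; ring
  have hb21 : ⟪b₂, b₁⟫ = 0 := by rw [real_inner_comm]; exact horth
  -- coordinates
  obtain ⟨X, hXdef⟩ : ∃ X : E2 → ℝ, X = fun w => ⟪w - x, b₁⟫ := ⟨_, rfl⟩
  obtain ⟨Y, hYdef⟩ : ∃ Y : E2 → ℝ, Y = fun w => ⟪w - x, b₂⟫ := ⟨_, rfl⟩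
  have hXcont : Continuous X := by
    rw [hXdef]; exact (continuous_id.sub continuous_const).inner continuous_const
  have hYcont : Continuous Y := by
    rw [hYdef]; exact (continuous_id.sub continuous_const).inner continuous_const
  have hXY : ∀ s t : ℝ, X (x + s • b₁ + t • b₂) = s ∧ Y (x + s • b₁ + t • b₂) = t := by
    intro s t
    have hd : x + s • b₁ + t • b₂ - x = s • b₁ + t • b₂ := by abel
    constructor
    · simp only [hXdef]
      rw [hd, inner_add_left, real_inner_smul_left, real_inner_smul_left, hb11, hb21]; ring
    · simp only [hYdef]
      rw [hd, inner_add_left, real_inner_smul_left, real_inner_smul_left, hb22, horth]; ring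
  -- every vector is a combination of b₁, b₂
  have hspan : ∀ y : E2, ∃ c d : ℝ, y = c • b₁ + d • b₂ := by
    have horm : Orthonormal ℝ (![b₁, b₂]) := by
      rw [orthonormal_iff_ite]
      intro i j
      fin_cases i <;> fin_cases j <;> simp [hb11, hb22, hb21, horth, hb₁, hb₂]
    have hsp : Submodule.span ℝ (Set.range ![b₁, b₂]) = ⊤ :=
      horm.linearIndependent.span_eq_top_of_card_eq_finrank
        (by simp [finrank_euclideanSpace_fin])
    intro y
    have hy : y ∈ Submodule.span ℝ (Set.range ![b₁, b₂]) := by rw [hsp]; trivial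
    rw [Submodule.mem_span_range_iff_exists_fun] at hy
    obtain ⟨c, hc⟩ := hy
    exact ⟨c 0, c 1, by rw [← hc, Fin.sum_univ_two]; simp⟩
  have hrep : ∀ w : E2, w = x + (X w) • b₁ + (Y w) • b₂ := by
    intro w
    obtain ⟨c, d, hcd⟩ := hspan (w - x)
    have hXw : X w = c := by
      simp only [hXdef]
      rw [hcd, inner_add_left, real_inner_smul_left, real_inner_smul_left, hb11, hb21]; ring
    have hYw : Y w = d := by
      simp only [hYdef]
      rw [hcd, inner_add_left, real_inner_smul_left, real_inner_smul_left, hb22, horth]; ring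
    rw [hXw, hYw, add_assoc, ← hcd]; abel
  -- coordinate bounds
  have hXle : ∀ w : E2, |X w| ≤ ‖w - x‖ := by
    intro w
    calc |X w| = |⟪w - x, b₁⟫| := by rw [hXdef]
    _ ≤ ‖w - x‖ * ‖b₁‖ := abs_real_inner_le_norm _ _
    _ = ‖w - x‖ := by rw [hb₁, mul_one]
  have hYle : ∀ w : E2, |Y w| ≤ ‖w - x‖ := by
    intro w
    calc |Y w| = |⟪w - x, b₂⟫| := by rw [hYdef]
    _ ≤ ‖w - x‖ * ‖b₂‖ := abs_real_inner_le_norm _ _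
    _ = ‖w - x‖ := by rw [hb₂, mul_one]
  -- boundedness
  obtain ⟨C0, hC0⟩ := isBounded_iff_forall_norm_le.mp hScomp.isBounded
  have hR : ∀ w ∈ S, ‖w - x‖ ≤ C0 + ‖x‖ := fun w hw =>
    (norm_sub_le w x).trans (add_le_add_left (hC0 w hw) _)
  -- convexity of rows and columns
  have hrowconv : ∀ v : ℝ, Convex ℝ {t : ℝ | x + t • b₁ + v • b₂ ∈ S} := by
    intro v t₁ h₁ t₂ h₂ α β hα hβ hαβ
    have hcv := (hbc (x + v • b₂)).1
    have hm₁ : x + t₁ • b₁ + v • b₂ ∈ lineThru (x + v • b₂) b₁ ∩ S := ⟨⟨t₁, by module⟩, h₁⟩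
    have hm₂ : x + t₂ • b₁ + v • b₂ ∈ lineThru (x + v • b₂) b₁ ∩ S := ⟨⟨t₂, by module⟩, h₂⟩
    have hres := hcv hm₁ hm₂ hα hβ hαβ
    have hβ' : β = 1 - α := by linarith
    subst hβ'
    have heq : α • (x + t₁ • b₁ + v • b₂) + (1-α) • (x + t₂ • b₁ + v • b₂)
        = x + (α * t₁ + (1-α) * t₂) • b₁ + v • b₂ := by module
    rw [heq] at hres
    simpa [smul_eq_mul] using hres.2
  have hcolconv : ∀ u : ℝ, Convex ℝ {t : ℝ | x + u • b₁ + t • b₂ ∈ S} := by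
    intro u t₁ h₁ t₂ h₂ α β hα hβ hαβ
    have hcv := (hbc (x + u • b₁)).2
    have hm₁ : x + u • b₁ + t₁ • b₂ ∈ lineThru (x + u • b₁) b₂ ∩ S := ⟨⟨t₁, by module⟩, h₁⟩
    have hm₂ : x + u • b₁ + t₂ • b₂ ∈ lineThru (x + u • b₁) b₂ ∩ S := ⟨⟨t₂, by module⟩, h₂⟩
    have hres := hcv hm₁ hm₂ hα hβ hαβ
    have hβ' : β = 1 - α := by linarith
    subst hβ'
    have heq : α • (x + u • b₁ + t₁ • b₂) + (1-α) • (x + u • b₁ + t₂ • b₂)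
        = x + u • b₁ + (α * t₁ + (1-α) * t₂) • b₂ := by module
    rw [heq] at hres
    simpa [smul_eq_mul] using hres.2
  -- extreme points of rows are frontier points
  have hfrontmax : ∀ p ∈ S, ∃ w ∈ frontier S, Y w = Y p ∧ X p ≤ X w := by
    intro p hp
    set T := {t : ℝ | x + t • b₁ + (Y p) • b₂ ∈ S} with hTdef
    have hTne : (X p) ∈ T := by
      show x + (X p) • b₁ + (Y p) • b₂ ∈ S
      rw [← hrep p]; exact hp
    have hcont : Continuous (fun t : ℝ => x + t • b₁ + (Y p) • b₂) := by fun_prop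
    have hTclosed : IsClosed T := hS_closed.preimage hcont
    have hTbdd : BddAbove T := by
      refine ⟨C0 + ‖x‖, fun t ht => ?_⟩
      have h1 : ‖(x + t • b₁ + (Y p) • b₂) - x‖ ≤ C0 + ‖x‖ := hR _ ht
      have h2 := hXle (x + t • b₁ + (Y p) • b₂)
      rw [(hXY t (Y p)).1] at h2
      calc t ≤ |t| := le_abs_self t
      _ ≤ C0 + ‖x‖ := h2.trans h1
    have hsupmem : sSup T ∈ T := hTclosed.csSup_mem ⟨X p, hTne⟩ hTbdd
    refine ⟨x + (sSup T) • b₁ + (Y p) • b₂, ?_, (hXY _ _).2, ?_⟩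
    · rw [hS_closed.frontier_eq]
      refine ⟨hsupmem, fun hint => ?_⟩
      rw [mem_interior_iff_mem_nhds, Metric.mem_nhds_iff] at hint
      obtain ⟨ε, hε, hball⟩ := hint
      have hmem : x + (sSup T + ε/2) • b₁ + (Y p) • b₂ ∈ S := by
        apply hball
        rw [mem_ball, dist_eq_norm]
        have heq2 : (x + (sSup T + ε/2) • b₁ + (Y p) • b₂) - (x + (sSup T) • b₁ + (Y p) • b₂)
            = (ε/2) • b₁ := by module
        rw [heq2, norm_smul, hb₁]
        rw [mul_one, Real.norm_eq_abs, abs_of_pos (half_pos hε)]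
        linarith
      have : sSup T + ε/2 ≤ sSup T := le_csSup hTbdd hmem
      linarith
    · rw [(hXY _ _).1]
      exact le_csSup hTbdd hTne
  have hfrontmin : ∀ p ∈ S, ∃ w ∈ frontier S, Y w = Y p ∧ X w ≤ X p := by
    intro p hp
    set T := {t : ℝ | x + t • b₁ + (Y p) • b₂ ∈ S} with hTdef
    have hTne : (X p) ∈ T := by
      show x + (X p) • b₁ + (Y p) • b₂ ∈ S
      rw [← hrep p]; exact hp
    have hcont : Continuous (fun t : ℝ => x + t • b₁ + (Y p) • b₂) := by fun_prop
    have hTclosed : IsClosed T := hS_closed.preimage hcont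
    have hTbdd : BddBelow T := by
      refine ⟨-(C0 + ‖x‖), fun t ht => ?_⟩
      have h1 : ‖(x + t • b₁ + (Y p) • b₂) - x‖ ≤ C0 + ‖x‖ := hR _ ht
      have h2 := hXle (x + t • b₁ + (Y p) • b₂)
      rw [(hXY t (Y p)).1] at h2
      have := (abs_le.mp (h2.trans h1)).1
      linarith
    have hinfmem : sInf T ∈ T := hTclosed.csInf_mem ⟨X p, hTne⟩ hTbdd
    refine ⟨x + (sInf T) • b₁ + (Y p) • b₂, ?_, (hXY _ _).2, ?_⟩
    · rw [hS_closed.frontier_eq]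
      refine ⟨hinfmem, fun hint => ?_⟩
      rw [mem_interior_iff_mem_nhds, Metric.mem_nhds_iff] at hint
      obtain ⟨ε, hε, hball⟩ := hint
      have hmem : x + (sInf T - ε/2) • b₁ + (Y p) • b₂ ∈ S := by
        apply hball
        rw [mem_ball, dist_eq_norm]
        have heq2 : (x + (sInf T - ε/2) • b₁ + (Y p) • b₂) - (x + (sInf T) • b₁ + (Y p) • b₂)
            = (-(ε/2)) • b₁ := by module
        rw [heq2, norm_smul, hb₁]
        rw [mul_one, Real.norm_eq_abs, abs_neg, abs_of_pos (half_pos hε)]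
        linarith
      have : sInf T ≤ sInf T - ε/2 := csInf_le hTbdd hmem
      linarith
    · rw [(hXY _ _).1]
      exact csInf_le hTbdd hTne
  -- extract points of S in all four quadrants
  have hget : ∀ C ∈ QuadrantCones b₁ b₂ x, ∃ w ∈ C, w ∈ S := by
    intro C hC
    obtain ⟨w, hwC, hwS⟩ := Set.not_subset.mp (hcon C hC)
    exact ⟨w, hwC, Set.not_notMem.mp hwS⟩
  obtain ⟨p₁, hp₁C, hp₁S⟩ := hget (Quadrant x b₁ b₂) (by simp [QuadrantCones])
  obtain ⟨p₂, hp₂C, hp₂S⟩ := hget (Quadrant x (-b₁) b₂) (by simp [QuadrantCones])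
  obtain ⟨p₃, hp₃C, hp₃S⟩ := hget (Quadrant x b₁ (-b₂)) (by simp [QuadrantCones])
  obtain ⟨p₄, hp₄C, hp₄S⟩ := hget (Quadrant x (-b₁) (-b₂)) (by simp [QuadrantCones])
  obtain ⟨s₁, t₁, hs₁, ht₁, hpe₁⟩ := hp₁C
  obtain ⟨s₂, t₂, hs₂, ht₂, hpe₂⟩ := hp₂C
  obtain ⟨s₃, t₃, hs₃, ht₃, hpe₃⟩ := hp₃C
  obtain ⟨s₄, t₄, hs₄, ht₄, hpe₄⟩ := hp₄C
  have hX₁ : X p₁ = s₁ := by rw [hpe₁]; exact (hXY s₁ t₁).1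
  have hY₁ : Y p₁ = t₁ := by rw [hpe₁]; exact (hXY s₁ t₁).2
  have hpe₂' : p₂ = x + (-s₂) • b₁ + t₂ • b₂ := by rw [hpe₂]; module
  have hX₂ : X p₂ = -s₂ := by rw [hpe₂']; exact (hXY _ _).1
  have hY₂ : Y p₂ = t₂ := by rw [hpe₂']; exact (hXY _ _).2
  have hpe₃' : p₃ = x + s₃ • b₁ + (-t₃) • b₂ := by rw [hpe₃]; module
  have hX₃ : X p₃ = s₃ := by rw [hpe₃']; exact (hXY _ _).1
  have hY₃ : Y p₃ = -t₃ := by rw [hpe₃']; exact (hXY _ _).2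
  have hpe₄' : p₄ = x + (-s₄) • b₁ + (-t₄) • b₂ := by rw [hpe₄]; module
  have hX₄ : X p₄ = -s₄ := by rw [hpe₄']; exact (hXY _ _).1
  have hY₄ : Y p₄ = -t₄ := by rw [hpe₄']; exact (hXY _ _).2
  -- the minimal coordinate size
  set m := min (min s₁ t₁) (min (min s₂ t₂) (min (min s₃ t₃) (min s₄ t₄))) with hmdef
  have hm0 : 0 < m :=
    lt_min (lt_min hs₁ ht₁) (lt_min (lt_min hs₂ ht₂) (lt_min (lt_min hs₃ ht₃) (lt_min hs₄ ht₄)))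
  have hms₁ : m ≤ s₁ := (min_le_left _ _).trans (min_le_left _ _)
  have hmt₁ : m ≤ t₁ := (min_le_left _ _).trans (min_le_right _ _)
  have hms₂ : m ≤ s₂ :=
    (min_le_right _ _).trans ((min_le_left _ _).trans (min_le_left _ _))
  have hmt₂ : m ≤ t₂ :=
    (min_le_right _ _).trans ((min_le_left _ _).trans (min_le_right _ _))
  have hms₃ : m ≤ s₃ :=
    (min_le_right _ _).trans ((min_le_right _ _).trans ((min_le_left _ _).trans (min_le_left _ _)))
  have hmt₃ : m ≤ t₃ :=
    (min_le_right _ _).trans ((min_le_right _ _).trans ((min_le_left _ _).trans (min_le_right _ _)))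
  have hms₄ : m ≤ s₄ :=
    (min_le_right _ _).trans ((min_le_right _ _).trans ((min_le_right _ _).trans (min_le_left _ _)))
  have hmt₄ : m ≤ t₄ :=
    (min_le_right _ _).trans ((min_le_right _ _).trans ((min_le_right _ _).trans (min_le_right _ _)))
  -- pick a nearby point outside S
  have hxcl : x ∈ closure Sᶜ := by
    rw [frontier_eq_closure_inter_closure] at hx; exact hx.2
  obtain ⟨z, hzS, hzd⟩ := Metric.mem_closure_iff.mp hxcl m hm0
  obtain ⟨u, hudef⟩ : ∃ u : ℝ, u = X z := ⟨X z, rfl⟩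
  obtain ⟨v, hvdef⟩ : ∃ v : ℝ, v = Y z := ⟨Y z, rfl⟩
  have hzrep : z = x + u • b₁ + v • b₂ := by rw [hudef, hvdef]; exact hrep z
  have hznorm : ‖z - x‖ < m := by rwa [← dist_eq_norm, dist_comm]
  have hum : -m < u ∧ u < m := abs_lt.mp (by rw [hudef]; exact lt_of_le_of_lt (hXle z) hznorm)
  have hvm : -m < v ∧ v < m := abs_lt.mp (by rw [hvdef]; exact lt_of_le_of_lt (hYle z) hznorm)
  -- the row and the column through z avoid z
  have hzrow : u ∉ {t : ℝ | x + t • b₁ + v • b₂ ∈ S} := by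
    intro h
    exact hzS (by rw [hzrep]; exact h)
  have hzcol : v ∉ {t : ℝ | x + u • b₁ + t • b₂ ∈ S} := by
    intro h
    exact hzS (by rw [hzrep]; exact h)
  -- the row and column lie entirely on one side
  have hRside : (∀ t ∈ {t : ℝ | x + t • b₁ + v • b₂ ∈ S}, t < u) ∨
      (∀ t ∈ {t : ℝ | x + t • b₁ + v • b₂ ∈ S}, u < t) := by
    by_contra hcontra
    push_neg at hcontra
    obtain ⟨⟨a, haR, hau⟩, ⟨c, hcR, hcu⟩⟩ := hcontra
    exact hzrow ((hrowconv v).ordConnected.out hcR haR ⟨hcu, hau⟩)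
  have hCside : (∀ t ∈ {t : ℝ | x + u • b₁ + t • b₂ ∈ S}, t < v) ∨
      (∀ t ∈ {t : ℝ | x + u • b₁ + t • b₂ ∈ S}, v < t) := by
    by_contra hcontra
    push_neg at hcontra
    obtain ⟨⟨a, haR, hau⟩, ⟨c, hcR, hcu⟩⟩ := hcontra
    exact hzcol ((hcolconv u).ordConnected.out hcR haR ⟨hcu, hau⟩)
  -- row membership from coordinates
  have hrowmem : ∀ w ∈ S, Y w = v → X w ∈ {t : ℝ | x + t • b₁ + v • b₂ ∈ S} := by
    intro w hw hYw
    show x + (X w) • b₁ + v • b₂ ∈ S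
    rw [← hYw, ← hrep w]; exact hw
  have hcolmem : ∀ w ∈ S, X w = u → Y w ∈ {t : ℝ | x + u • b₁ + t • b₂ ∈ S} := by
    intro w hw hXw
    show x + u • b₁ + (Y w) • b₂ ∈ S
    rw [← hXw, ← hrep w]; exact hw
  -- the connectivity contradiction machine
  have final : ∀ O Pc : Set E2, IsOpen O → IsOpen Pc → O ∩ Pc = ∅ → S ⊆ O ∪ Pc →
      (frontier S ∩ O).Nonempty → (frontier S ∩ Pc).Nonempty → False := by
    intro O Pc hO hPc hdisj hsub hne₁ hne₂
    have hpre : IsPreconnected (frontier S) := hbd.isConnected.isPreconnected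
    obtain ⟨w, hw⟩ := hpre O Pc hO hPc (fun a ha => hsub (hfsub ha)) hne₁ hne₂
    have : w ∈ (∅ : Set E2) := hdisj ▸ hw.2
    exact this
  have hOlt : ∀ c : ℝ, IsOpen {w : E2 | c < X w} := fun c => isOpen_lt continuous_const hXcont
  have hOgt : ∀ c : ℝ, IsOpen {w : E2 | X w < c} := fun c => isOpen_lt hXcont continuous_const
  have hOltY : ∀ c : ℝ, IsOpen {w : E2 | c < Y w} := fun c => isOpen_lt continuous_const hYcont
  have hOgtY : ∀ c : ℝ, IsOpen {w : E2 | Y w < c} := fun c => isOpen_lt hYcont continuous_const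
  rcases hRside with hRow | hRow <;> rcases hCside with hCol | hCol
  · -- Case 1: row left of u, column below v; use quadrant up-right
    obtain ⟨w₁, hw₁F, hw₁Y, hw₁X⟩ := hfrontmax p₁ hp₁S
    obtain ⟨w₄, hw₄F, hw₄Y, hw₄X⟩ := hfrontmin p₄ hp₄S
    refine final ({w | u < X w} ∩ {w | v < Y w}) ({w | X w < u} ∪ {w | Y w < v})
      ((hOlt u).inter (hOltY v)) ((hOgt u).union (hOgtY v)) ?_ ?_
      ⟨w₁, hw₁F, ?_, ?_⟩ ⟨w₄, hw₄F, Set.mem_union_left _ ?_⟩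
    · apply Set.eq_empty_iff_forall_notMem.mpr
      rintro w ⟨⟨h1, h2⟩, h3 | h4⟩
      · simp only [mem_setOf_eq] at h1 h2 h3; linarith
      · simp only [mem_setOf_eq] at h1 h2 h4; linarith
    · intro w hw
      by_cases hxu : X w < u
      · exact Or.inr (Or.inl hxu)
      by_cases hyv : Y w < v
      · exact Or.inr (Or.inr hyv)
      push_neg at hxu hyv
      have hYw : v < Y w := by
        rcases lt_or_eq_of_le hyv with h | h
        · exact h
        · exact absurd (hRow _ (hrowmem w hw h.symm)) (not_lt.mpr hxu)
      have hXw : u < X w := by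
        rcases lt_or_eq_of_le hxu with h | h
        · exact h
        · exact absurd (hCol _ (hcolmem w hw h.symm)) (not_lt.mpr hYw.le)
      exact Or.inl ⟨hXw, hYw⟩
    · simp only [mem_setOf_eq]; linarith [hum.2, hms₁, hw₁X, hX₁.ge]
    · simp only [mem_setOf_eq]; linarith [hvm.2, hmt₁, hw₁Y.le, hY₁.ge]
    · simp only [mem_setOf_eq]; linarith [hum.1, hms₄, hw₄X, hX₄.le]
  · -- Case 2: row left of u, column above v; use quadrant down-right
    obtain ⟨w₃, hw₃F, hw₃Y, hw₃X⟩ := hfrontmax p₃ hp₃S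
    obtain ⟨w₂, hw₂F, hw₂Y, hw₂X⟩ := hfrontmin p₂ hp₂S
    refine final ({w | u < X w} ∩ {w | Y w < v}) ({w | X w < u} ∪ {w | v < Y w})
      ((hOlt u).inter (hOgtY v)) ((hOgt u).union (hOltY v)) ?_ ?_
      ⟨w₃, hw₃F, ?_, ?_⟩ ⟨w₂, hw₂F, Set.mem_union_left _ ?_⟩
    · apply Set.eq_empty_iff_forall_notMem.mpr
      rintro w ⟨⟨h1, h2⟩, h3 | h4⟩
      · simp only [mem_setOf_eq] at h1 h2 h3; linarith
      · simp only [mem_setOf_eq] at h1 h2 h4; linarith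
    · intro w hw
      by_cases hxu : X w < u
      · exact Or.inr (Or.inl hxu)
      by_cases hyv : v < Y w
      · exact Or.inr (Or.inr hyv)
      push_neg at hxu hyv
      have hYw : Y w < v := by
        rcases lt_or_eq_of_le hyv with h | h
        · exact h
        · exact absurd (hRow _ (hrowmem w hw h)) (not_lt.mpr hxu)
      have hXw : u < X w := by
        rcases lt_or_eq_of_le hxu with h | h
        · exact h
        · exact absurd (hCol _ (hcolmem w hw h.symm)) (not_lt.mpr hYw.le)
      exact Or.inl ⟨hXw, hYw⟩
    · simp only [mem_setOf_eq]; linarith [hum.2, hms₃, hw₃X, hX₃.ge]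
    · simp only [mem_setOf_eq]; linarith [hvm.1, hmt₃, hw₃Y.le, hY₃.le]
    · simp only [mem_setOf_eq]; linarith [hum.1, hms₂, hw₂X, hX₂.le]
  · -- Case 3: row right of u, column below v; use quadrant up-left
    obtain ⟨w₂, hw₂F, hw₂Y, hw₂X⟩ := hfrontmin p₂ hp₂S
    obtain ⟨w₃, hw₃F, hw₃Y, hw₃X⟩ := hfrontmax p₃ hp₃S
    refine final ({w | X w < u} ∩ {w | v < Y w}) ({w | u < X w} ∪ {w | Y w < v})
      ((hOgt u).inter (hOltY v)) ((hOlt u).union (hOgtY v)) ?_ ?_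
      ⟨w₂, hw₂F, ?_, ?_⟩ ⟨w₃, hw₃F, Set.mem_union_left _ ?_⟩
    · apply Set.eq_empty_iff_forall_notMem.mpr
      rintro w ⟨⟨h1, h2⟩, h3 | h4⟩
      · simp only [mem_setOf_eq] at h1 h2 h3; linarith
      · simp only [mem_setOf_eq] at h1 h2 h4; linarith
    · intro w hw
      by_cases hxu : u < X w
      · exact Or.inr (Or.inl hxu)
      by_cases hyv : Y w < v
      · exact Or.inr (Or.inr hyv)
      push_neg at hxu hyv
      have hYw : v < Y w := by
        rcases lt_or_eq_of_le hyv with h | h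
        · exact h
        · exact absurd (hRow _ (hrowmem w hw h.symm)) (not_lt.mpr hxu)
      have hXw : X w < u := by
        rcases lt_or_eq_of_le hxu with h | h
        · exact h
        · exact absurd (hCol _ (hcolmem w hw h)) (not_lt.mpr hYw.le)
      exact Or.inl ⟨hXw, hYw⟩
    · simp only [mem_setOf_eq]; linarith [hum.1, hms₂, hw₂X, hX₂.le]
    · simp only [mem_setOf_eq]; linarith [hvm.2, hmt₂, hw₂Y.le, hY₂.ge]
    · simp only [mem_setOf_eq]; linarith [hum.2, hms₃, hw₃X, hX₃.ge]
  · -- Case 4: row right of u, column above v; use quadrant down-left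
    obtain ⟨w₄, hw₄F, hw₄Y, hw₄X⟩ := hfrontmin p₄ hp₄S
    obtain ⟨w₁, hw₁F, hw₁Y, hw₁X⟩ := hfrontmax p₁ hp₁S
    refine final ({w | X w < u} ∩ {w | Y w < v}) ({w | u < X w} ∪ {w | v < Y w})
      ((hOgt u).inter (hOgtY v)) ((hOlt u).union (hOltY v)) ?_ ?_
      ⟨w₄, hw₄F, ?_, ?_⟩ ⟨w₁, hw₁F, Set.mem_union_left _ ?_⟩
    · apply Set.eq_empty_iff_forall_notMem.mpr
      rintro w ⟨⟨h1, h2⟩, h3 | h4⟩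
      · simp only [mem_setOf_eq] at h1 h2 h3; linarith
      · simp only [mem_setOf_eq] at h1 h2 h4; linarith
    · intro w hw
      by_cases hxu : u < X w
      · exact Or.inr (Or.inl hxu)
      by_cases hyv : v < Y w
      · exact Or.inr (Or.inr hyv)
      push_neg at hxu hyv
      have hYw : Y w < v := by
        rcases lt_or_eq_of_le hyv with h | h
        · exact h
        · exact absurd (hRow _ (hrowmem w hw h)) (not_lt.mpr hxu)
      have hXw : X w < u := by
        rcases lt_or_eq_of_le hxu with h | h
        · exact h
        · exact absurd (hCol _ (hcolmem w hw h)) (not_lt.mpr hYw.le)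
      exact Or.inl ⟨hXw, hYw⟩
    · simp only [mem_setOf_eq]; linarith [hum.1, hms₄, hw₄X, hX₄.le]
    · simp only [mem_setOf_eq]; linarith [hvm.1, hmt₄, hw₄Y.le, hY₄.le]
    · simp only [mem_setOf_eq]; linarith [hum.2, hms₁, hw₁X, hX₁.ge]
end
end

section
/- Let S ⊆ ℝ² be a compact set with path-connected boundary satisfying S = closure(interior(S)). If S is a π/2-lighthouse with axes ξ, Rξ, R²ξ, R³ξ (ξ = (b₁+b₂)/‖b₁+b₂‖, R a π/2-rotation), i.e., every boundary point admits an empty open quadrant-cone with one of these four axes, then S is biconvex with respect to b₁, b₂. -/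
noncomputable section

open Set Metric MeasureTheory Filter Real
open scoped RealInnerProductSpace Topology symmDiff

namespace LH

/-- Orthonormal pair hypothesis bundle. -/
structure ON (u v : E2) : Prop where
  hu : ‖u‖ = 1
  hv : ‖v‖ = 1
  huv : ⟪u, v⟫ = 0

lemma ON.huu {u v : E2} (h : ON u v) : ⟪u,u⟫ = 1 := by
  rw [real_inner_self_eq_norm_sq, h.hu]; norm_num
lemma ON.hvv {u v : E2} (h : ON u v) : ⟪v,v⟫ = 1 := by
  rw [real_inner_self_eq_norm_sq, h.hv]; norm_num
lemma ON.hvu {u v : E2} (h : ON u v) : ⟪v,u⟫ = 0 := by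
  rw [real_inner_comm]; exact h.huv
lemma ON.symm {u v : E2} (h : ON u v) : ON v u := ⟨h.hv, h.hu, h.hvu⟩
lemma ON.negL {u v : E2} (h : ON u v) : ON (-u) v := by
  refine ⟨?_, h.hv, ?_⟩
  · rw [norm_neg]; exact h.hu
  · rw [inner_neg_left, h.huv, neg_zero]
lemma ON.negR {u v : E2} (h : ON u v) : ON u (-v) := by
  refine ⟨h.hu, ?_, ?_⟩
  · rw [norm_neg]; exact h.hv
  · rw [inner_neg_right, h.huv, neg_zero]

lemma onpair {u v : E2} (h : ON u v) : Orthonormal ℝ ![u, v] := by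
  rw [orthonormal_iff_ite]
  intro i j
  fin_cases i <;> fin_cases j <;>
    simp only [Matrix.cons_val', Matrix.cons_val_zero, Matrix.cons_val_one, Matrix.head_cons,
      Matrix.empty_val', Matrix.cons_val_fin_one, Fin.mk_zero, Fin.mk_one] <;>
    norm_num [h.huu, h.hvv, h.hvu, h.huv, h.hu, h.hv]

lemma expand2 {u v : E2} (h : ON u v) (w : E2) :
    w = ⟪u,w⟫ • u + ⟪v,w⟫ • v := by
  have hON := onpair h
  have hcard : Fintype.card (Fin 2) = Module.finrank ℝ E2 := by simp [finrank_euclideanSpace]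
  set B : Module.Basis (Fin 2) ℝ E2 := basisOfLinearIndependentOfCardEqFinrank hON.linearIndependent hcard with hBdef
  have hB0 : B 0 = u := by rw [hBdef, coe_basisOfLinearIndependentOfCardEqFinrank]; rfl
  have hB1 : B 1 = v := by rw [hBdef, coe_basisOfLinearIndependentOfCardEqFinrank]; rfl
  have hw : B.repr w 0 • u + B.repr w 1 • v = w := by
    have := B.sum_repr w
    rwa [Fin.sum_univ_two, hB0, hB1] at this
  have c0 : ⟪u,w⟫ = B.repr w 0 := by
    have hh := congrArg (fun z : E2 => ⟪u, z⟫) hw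
    simp only [inner_add_right, real_inner_smul_right] at hh
    rw [h.huu, h.huv] at hh; linarith [hh.symm]
  have c1 : ⟪v,w⟫ = B.repr w 1 := by
    have hh := congrArg (fun z : E2 => ⟪v, z⟫) hw
    simp only [inner_add_right, real_inner_smul_right] at hh
    rw [h.hvv, h.hvu] at hh; linarith [hh.symm]
  rw [c0, c1, hw]

/-- The point with coordinates `(x, y)` in the frame `(u, v)`. -/
def pt (u v : E2) (x y : ℝ) : E2 := x • u + y • v

lemma pt_inner₁ {u v : E2} (h : ON u v) (x y : ℝ) : ⟪u, pt u v x y⟫ = x := by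
  simp only [pt, inner_add_right, real_inner_smul_right, h.huu, h.huv]; ring
lemma pt_inner₂ {u v : E2} (h : ON u v) (x y : ℝ) : ⟪v, pt u v x y⟫ = y := by
  simp only [pt, inner_add_right, real_inner_smul_right, h.hvv, h.hvu]; ring

lemma pt_eq_self {u v : E2} (h : ON u v) (w : E2) : pt u v ⟪u,w⟫ ⟪v,w⟫ = w :=
  (expand2 h w).symm

lemma pt_negL (u v : E2) (x y : ℝ) : pt (-u) v x y = pt u v (-x) y := by
  simp [pt, smul_neg, neg_smul]
lemma pt_negR (u v : E2) (x y : ℝ) : pt u (-v) x y = pt u v x (-y) := by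
  simp [pt, smul_neg, neg_smul]

lemma dist_pt_le {u v : E2} (h : ON u v) (x y x' y' : ℝ) :
    dist (pt u v x y) (pt u v x' y') ≤ |x - x'| + |y - y'| := by
  have : pt u v x y - pt u v x' y' = (x - x') • u + (y - y') • v := by
    simp [pt, sub_smul]; abel
  rw [dist_eq_norm, this]
  calc ‖(x - x') • u + (y - y') • v‖ ≤ ‖(x - x') • u‖ + ‖(y - y') • v‖ := norm_add_le _ _
    _ = |x - x'| + |y - y'| := by rw [norm_smul, norm_smul, h.hu, h.hv]; simp

lemma abs_inner_le {u : E2} (hu : ‖u‖ = 1) (w w' : E2) : |⟪u,w⟫ - ⟪u,w'⟫| ≤ dist w w' := by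
  rw [← inner_sub_right, dist_eq_norm]
  calc |⟪u, w - w'⟫| ≤ ‖u‖ * ‖w - w'‖ := abs_real_inner_le_norm u (w - w')
    _ = ‖w - w'‖ := by rw [hu, one_mul]


/-- "The open quadrant in directions `(u,v)` at `z` misses `S`." -/
def NEfree (u v : E2) (S : Set E2) (z : E2) : Prop :=
  ∀ s ∈ S, ¬(⟪u, z⟫ < ⟪u, s⟫ ∧ ⟪v, z⟫ < ⟪v, s⟫)

/-- Coordinate form of the lighthouse hypothesis. -/
def LHform (u v : E2) (S : Set E2) : Prop :=
  ∀ z ∈ frontier S,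
    NEfree u v S z ∨ NEfree (-u) v S z ∨ NEfree u (-v) S z ∨ NEfree (-u) (-v) S z

lemma NEfree_comm {u v : E2} {S : Set E2} {z : E2} (h : NEfree u v S z) : NEfree v u S z := by
  intro s hs hc
  exact h s hs ⟨hc.2, hc.1⟩

lemma quadrant_empty_NEfree {u v : E2} (h : ON u v) {S : Set E2} {z : E2}
    (hq : Quadrant z u v ∩ S = ∅) : NEfree u v S z := by
  intro s hs hc
  have hmem : s ∈ Quadrant z u v := by
    refine ⟨⟪u, s - z⟫, ⟪v, s - z⟫, ?_, ?_, ?_⟩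
    · rw [inner_sub_right]; linarith [hc.1]
    · rw [inner_sub_right]; linarith [hc.2]
    · have he := expand2 h (s - z)
      have h2 : z + ⟪u, s - z⟫ • u + ⟪v, s - z⟫ • v = s := by rw [add_assoc, ← he]; abel
      exact h2.symm
  have : s ∈ Quadrant z u v ∩ S := ⟨hmem, hs⟩
  rw [hq] at this
  exact this

lemma LHform_of_hlh {b₁ b₂ : E2} (h : ON b₁ b₂) {S : Set E2}
    (hlh : ∀ x ∈ frontier S, ∃ C ∈ QuadrantCones b₁ b₂ x, C ∩ S = ∅) :
    LHform b₁ b₂ S := by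
  intro z hz
  obtain ⟨C, hC, hCS⟩ := hlh z hz
  simp only [QuadrantCones, Set.mem_insert_iff, Set.mem_singleton_iff] at hC
  rcases hC with rfl | rfl | rfl | rfl
  · exact Or.inl (quadrant_empty_NEfree h hCS)
  · exact Or.inr (Or.inl (quadrant_empty_NEfree h.negL hCS))
  · exact Or.inr (Or.inr (Or.inl (quadrant_empty_NEfree h.negR hCS)))
  · exact Or.inr (Or.inr (Or.inr (quadrant_empty_NEfree h.negL.negR hCS)))

lemma LHform_negR {u v : E2} {S : Set E2} (h : LHform u v S) : LHform u (-v) S := by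
  intro z hz
  rcases h z hz with h1 | h2 | h3 | h4
  · exact Or.inr (Or.inr (Or.inl (by rwa [neg_neg])))
  · exact Or.inr (Or.inr (Or.inr (by rwa [neg_neg])))
  · exact Or.inl h3
  · exact Or.inr (Or.inl h4)

lemma LHform_swap {u v : E2} {S : Set E2} (h : LHform u v S) : LHform v u S := by
  intro z hz
  rcases h z hz with h1 | h2 | h3 | h4
  · exact Or.inl (NEfree_comm h1)
  · exact Or.inr (Or.inr (Or.inl (NEfree_comm h2)))
  · exact Or.inr (Or.inl (NEfree_comm h3))
  · exact Or.inr (Or.inr (Or.inr (NEfree_comm h4)))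

/-- The part of the vertical line `X = x` at height `≥ Y₀` that lies in `S` (as a set of heights). -/
def col (u v : E2) (S : Set E2) (Y₀ x : ℝ) : Set ℝ := {y | Y₀ ≤ y ∧ pt u v x y ∈ S}

/-- Lowest height `≥ Y₀` of a point of `S` on the vertical line `X = x`. -/
noncomputable def mu (u v : E2) (S : Set E2) (Y₀ x : ℝ) : ℝ := sInf (col u v S Y₀ x)

lemma col_negL (u v : E2) (S : Set E2) (Y₀ x : ℝ) :
    col (-u) v S Y₀ x = col u v S Y₀ (-x) := by
  ext y; simp [col, pt_negL]

lemma mu_negL (u v : E2) (S : Set E2) (Y₀ x : ℝ) :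
    mu (-u) v S Y₀ x = mu u v S Y₀ (-x) := by
  rw [mu, mu, col_negL]

lemma col_closed {u v : E2} {S : Set E2} (hS : IsClosed S) (Y₀ x : ℝ) :
    IsClosed (col u v S Y₀ x) := by
  have h1 : Continuous (fun y : ℝ => pt u v x y) := by
    simp only [pt]; fun_prop
  exact isClosed_Ici.inter (hS.preimage h1)

lemma col_bddBelow (u v : E2) (S : Set E2) (Y₀ x : ℝ) : BddBelow (col u v S Y₀ x) :=
  ⟨Y₀, fun y hy => hy.1⟩

lemma mu_mem {u v : E2} {S : Set E2} (hS : IsClosed S) {Y₀ x : ℝ}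
    (hne : (col u v S Y₀ x).Nonempty) : mu u v S Y₀ x ∈ col u v S Y₀ x :=
  (col_closed hS Y₀ x).csInf_mem hne (col_bddBelow u v S Y₀ x)

lemma mu_le {u v : E2} {S : Set E2} {Y₀ x y : ℝ} (hy : y ∈ col u v S Y₀ x) :
    mu u v S Y₀ x ≤ y := csInf_le (col_bddBelow u v S Y₀ x) hy

lemma le_mu {u v : E2} {S : Set E2} {Y₀ x : ℝ} (hne : (col u v S Y₀ x).Nonempty) :
    Y₀ ≤ mu u v S Y₀ x := le_csInf hne (fun y hy => hy.1)


lemma mem_frontier_of {S : Set E2} {w : E2} (hw : w ∈ S)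
    (happ : ∀ ε > 0, ∃ w', w' ∉ S ∧ dist w w' < ε) : w ∈ frontier S := by
  rw [frontier_eq_closure_inter_closure]
  refine ⟨subset_closure hw, ?_⟩
  rw [Metric.mem_closure_iff]
  intro ε hε
  obtain ⟨w', hw1, hw2⟩ := happ ε hε
  exact ⟨w', hw1, hw2⟩

/-- At the bottom point of an upper column over the gap, the empty quadrant points
either NE or NW. -/
lemma label {u v : E2} (h : ON u v) {S : Set E2} (hSc : IsClosed S)
    (hLH : LHform u v S) {Y₀ α β : ℝ} {a b : E2}
    (ha : a ∈ S) (hb : b ∈ S)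
    (haX : ⟪u,a⟫ = α) (haY : ⟪v,a⟫ = Y₀) (hbX : ⟪u,b⟫ = β) (hbY : ⟪v,b⟫ = Y₀)
    (hgap : ∀ x, α < x → x < β → pt u v x Y₀ ∉ S)
    {x : ℝ} (hx1 : α < x) (hx2 : x < β) (hne : (col u v S Y₀ x).Nonempty) :
    NEfree u v S (pt u v x (mu u v S Y₀ x)) ∨ NEfree (-u) v S (pt u v x (mu u v S Y₀ x)) := by
  set m := mu u v S Y₀ x with hm
  have hmem := mu_mem hSc hne
  have hmY : Y₀ ≤ m := hmem.1
  have hmS : pt u v x m ∈ S := hmem.2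
  have hmgt : Y₀ < m := by
    rcases lt_or_eq_of_le hmY with hlt | heq
    · exact hlt
    · exact absurd (heq ▸ hmS) (hgap x hx1 hx2)
  have hfr : pt u v x m ∈ frontier S := by
    apply mem_frontier_of hmS
    intro ε hε
    refine ⟨pt u v x (max Y₀ (m - ε/2)), ?_, ?_⟩
    · intro hmem'
      have hycol : max Y₀ (m - ε/2) ∈ col u v S Y₀ x := ⟨le_max_left _ _, hmem'⟩
      have := mu_le hycol
      have hlt : max Y₀ (m - ε/2) < m := max_lt hmgt (by linarith)
      rw [← hm] at this
      linarith
    · have hd := dist_pt_le h x m x (max Y₀ (m - ε/2))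
      have h1 : m - ε/2 ≤ max Y₀ (m - ε/2) := le_max_right _ _
      have h2 : max Y₀ (m - ε/2) < m := max_lt hmgt (by linarith)
      calc dist (pt u v x m) (pt u v x (max Y₀ (m - ε/2)))
          ≤ |x - x| + |m - max Y₀ (m - ε/2)| := hd
        _ < ε := by rw [sub_self, abs_zero, zero_add, abs_of_pos (by linarith)]; linarith
  have hzu : ⟪u, pt u v x m⟫ = x := pt_inner₁ h _ _
  have hzv : ⟪v, pt u v x m⟫ = m := pt_inner₂ h _ _
  rcases hLH _ hfr with h1 | h2 | h3 | h4
  · exact Or.inl h1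
  · exact Or.inr h2
  · exfalso
    refine h3 b hb ⟨?_, ?_⟩
    · rw [hzu, hbX]; exact hx2
    · rw [inner_neg_left, inner_neg_left, hzv, hbY]; linarith
  · exfalso
    refine h4 a ha ⟨?_, ?_⟩
    · rw [inner_neg_left, inner_neg_left, hzu, haX]; linarith
    · rw [inner_neg_left, inner_neg_left, hzv, haY]; linarith

/-- The pinching argument: if all bottom points of upper columns just to the right of an
interior point have empty NE-quadrants, the columns there get squeezed flat,
contradicting the interior ball. -/
lemma pinch {u v : E2} (h : ON u v) {S : Set E2} {Y₀ : ℝ}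
    {p : E2} {ρ : ℝ} (hρ : 0 < ρ) (hball : closedBall p ρ ⊆ S) (hSc : IsClosed S)
    (hYp : Y₀ + ρ < ⟪v, p⟫)
    (hNE : ∀ x, ⟪u,p⟫ < x → x < ⟪u,p⟫ + ρ/4 → NEfree u v S (pt u v x (mu u v S Y₀ x))) :
    False := by
  set Xp := ⟪u,p⟫ with hXp
  set Yp := ⟪v,p⟫ with hYpd
  have hseg : ∀ x y, |x - Xp| ≤ ρ/4 → |y - Yp| ≤ ρ/2 → pt u v x y ∈ S := by
    intro x y hx hy
    apply hball
    rw [Metric.mem_closedBall]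
    calc dist (pt u v x y) p = dist (pt u v x y) (pt u v Xp Yp) := by
          rw [pt_eq_self h p]
      _ ≤ |x - Xp| + |y - Yp| := dist_pt_le h _ _ _ _
      _ ≤ ρ := by linarith
  have hcolne : ∀ x, |x - Xp| ≤ ρ/4 → (col u v S Y₀ x).Nonempty := by
    intro x hx
    exact ⟨Yp, ⟨by linarith, hseg x Yp hx (by rw [sub_self, abs_zero]; linarith)⟩⟩
  have habs : ∀ x, Xp < x → x < Xp + ρ/4 → |x - Xp| ≤ ρ/4 := by
    intro x h1 h2
    rw [abs_of_pos (by linarith)]; linarith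
  set T := (fun x => mu u v S Y₀ x) '' Ioo Xp (Xp + ρ/4) with hT
  have hTne : T.Nonempty := ⟨_, ⟨Xp + ρ/8, ⟨by linarith, by linarith⟩, rfl⟩⟩
  have hTbdd : BddBelow T := by
    refine ⟨Y₀, ?_⟩
    rintro t ⟨x, hx, rfl⟩
    exact le_mu (hcolne x (habs x hx.1 hx.2))
  set θ := sInf T with hθ
  obtain ⟨t₀, ht₀T, ht₀⟩ := exists_lt_of_csInf_lt hTne (show sInf T < θ + ρ/8 by rw [← hθ]; linarith)
  obtain ⟨x₀, hx₀I, rfl⟩ := ht₀T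
  set x'' := (x₀ + (Xp + ρ/4))/2 with hx''
  have hx''I : x'' ∈ Ioo Xp (Xp + ρ/4) := ⟨by rcases hx₀I with ⟨h1,h2⟩; simp only [hx'']; linarith,
    by rcases hx₀I with ⟨h1,h2⟩; simp only [hx'']; linarith⟩
  have hx₀x'' : x₀ < x'' := by rcases hx₀I with ⟨h1,h2⟩; simp only [hx'']; linarith
  have habs'' : |x'' - Xp| ≤ ρ/4 := habs _ hx''I.1 hx''I.2
  -- upper point of the ball segment at x''
  have hupS : pt u v x'' (Yp + ρ/2) ∈ S :=
    hseg _ _ habs'' (by rw [show Yp + ρ/2 - Yp = ρ/2 by ring, abs_of_pos (by linarith)])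
  -- lower point of the ball segment at x''
  have hlow : Yp - ρ/2 ∈ col u v S Y₀ x'' :=
    ⟨by linarith, hseg _ _ habs'' (by rw [show Yp - ρ/2 - Yp = -(ρ/2) by ring, abs_neg, abs_of_pos (by linarith)])⟩
  have h1 : mu u v S Y₀ x'' ≤ Yp - ρ/2 := mu_le hlow
  have h2 : θ ≤ mu u v S Y₀ x'' := csInf_le hTbdd ⟨x'', hx''I, rfl⟩
  have h3 : Yp + ρ/2 ≤ mu u v S Y₀ x₀ := by
    by_contra hcon
    push_neg at hcon
    exact hNE x₀ hx₀I.1 hx₀I.2 _ hupS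
      ⟨by rw [pt_inner₁ h, pt_inner₁ h]; exact hx₀x'', by rw [pt_inner₂ h, pt_inner₂ h]; exact hcon⟩
  linarith


/-- Core contradiction: a horizontal gap together with a point of `S` above the gap
is impossible. -/
lemma gapCore {u v : E2} (h : ON u v) {S : Set E2} (hScomp : IsCompact S)
    (hreg : S = closure (interior S)) (hLH : LHform u v S)
    {a b : E2} (ha : a ∈ S) (hb : b ∈ S)
    (hY : ⟪v,a⟫ = ⟪v,b⟫)
    (hgap : ∀ x, ⟪u,a⟫ < x → x < ⟪u,b⟫ → pt u v x ⟪v,a⟫ ∉ S)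
    {q : E2} (hq : q ∈ S) (hq1 : ⟪u,a⟫ < ⟪u,q⟫) (hq2 : ⟪u,q⟫ < ⟪u,b⟫) (hq3 : ⟪v,a⟫ < ⟪v,q⟫) :
    False := by
  have hSc : IsClosed S := hScomp.isClosed
  set α := ⟪u,a⟫ with hα
  set β := ⟪u,b⟫ with hβ
  set Y₀ := ⟪v,a⟫ with hY₀
  set ε := (min (min (⟪u,q⟫ - α) (β - ⟪u,q⟫)) (⟪v,q⟫ - Y₀)) / 4 with hε
  have h4ε₁ : 4*ε ≤ ⟪u,q⟫ - α := by
    rw [hε]; have := min_le_left (min (⟪u,q⟫ - α) (β - ⟪u,q⟫)) (⟪v,q⟫ - Y₀)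
    have := min_le_left (⟪u,q⟫ - α) (β - ⟪u,q⟫); linarith
  have h4ε₂ : 4*ε ≤ β - ⟪u,q⟫ := by
    rw [hε]; have := min_le_left (min (⟪u,q⟫ - α) (β - ⟪u,q⟫)) (⟪v,q⟫ - Y₀)
    have := min_le_right (⟪u,q⟫ - α) (β - ⟪u,q⟫); linarith
  have h4ε₃ : 4*ε ≤ ⟪v,q⟫ - Y₀ := by
    rw [hε]; have := min_le_right (min (⟪u,q⟫ - α) (β - ⟪u,q⟫)) (⟪v,q⟫ - Y₀); linarith
  have hεpos : 0 < ε := by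
    rw [hε]
    have h1 : 0 < ⟪u,q⟫ - α := by linarith
    have h2 : 0 < β - ⟪u,q⟫ := by linarith
    have h3 : 0 < ⟪v,q⟫ - Y₀ := by linarith
    have := lt_min (lt_min h1 h2) h3
    linarith
  have hqc : q ∈ closure (interior S) := by rw [← hreg]; exact hq
  obtain ⟨p, hpI, hpd⟩ := Metric.mem_closure_iff.mp hqc ε hεpos
  obtain ⟨ρ₀, hρ₀pos, hρ₀⟩ := Metric.isOpen_iff.mp isOpen_interior p hpI
  set ρ := min (ρ₀/2) ε with hρdef
  have hρpos : 0 < ρ := lt_min (by linarith) hεpos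
  have hρε : ρ ≤ ε := min_le_right _ _
  have hball : closedBall p ρ ⊆ S := by
    refine (closedBall_subset_ball ?_).trans (hρ₀.trans interior_subset)
    have := min_le_left (ρ₀/2) ε
    rw [hρdef]; linarith [min_le_left (ρ₀/2) ε]
  set Xp := ⟪u,p⟫ with hXp
  set Yp := ⟪v,p⟫ with hYpd
  have hdist : dist p q < ε := by rw [dist_comm]; exact hpd
  have hXpq : |Xp - ⟪u,q⟫| ≤ dist p q := abs_inner_le h.hu p q
  have hYpq : |Yp - ⟪v,q⟫| ≤ dist p q := abs_inner_le h.hv p q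
  have hXpq' : |Xp - ⟪u,q⟫| < ε := lt_of_le_of_lt hXpq hdist
  have hYpq' : |Yp - ⟪v,q⟫| < ε := lt_of_le_of_lt hYpq hdist
  rw [abs_lt] at hXpq' hYpq'
  -- margins for the window V = Ioo (Xp - ρ/4) (Xp + ρ/4)
  have hVα : α < Xp - ρ/4 := by linarith
  have hVβ : Xp + ρ/4 < β := by linarith
  have hYpY₀ : Y₀ < Yp := by linarith
  -- the point of the gap row below p is not in S, so the ball stays above the row
  have hrow : pt u v Xp Y₀ ∉ S := hgap Xp (by linarith) (by linarith)
  have hYpρ : Y₀ + ρ < Yp := by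
    by_contra hcon
    push_neg at hcon
    apply hrow
    apply hball
    rw [Metric.mem_closedBall]
    calc dist (pt u v Xp Y₀) p = dist (pt u v Xp Y₀) (pt u v Xp Yp) := by
          rw [pt_eq_self h p]
      _ ≤ |Xp - Xp| + |Y₀ - Yp| := dist_pt_le h _ _ _ _
      _ ≤ ρ := by
          rw [sub_self, abs_zero, zero_add, abs_of_nonpos (by linarith)]; linarith
  -- columns over the window are nonempty
  have hcolV : ∀ x ∈ Ioo (Xp - ρ/4) (Xp + ρ/4), (col u v S Y₀ x).Nonempty := by
    intro x hx
    refine ⟨Yp, ⟨by linarith, hball ?_⟩⟩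
    rw [Metric.mem_closedBall]
    have hxa : |x - Xp| ≤ ρ/4 := abs_le.mpr ⟨by linarith [hx.1], by linarith [hx.2]⟩
    calc dist (pt u v x Yp) p = dist (pt u v x Yp) (pt u v Xp Yp) := by
          rw [pt_eq_self h p]
      _ ≤ |x - Xp| + |Yp - Yp| := dist_pt_le h _ _ _ _
      _ ≤ ρ := by rw [sub_self, abs_zero, add_zero]; linarith
  have hlabel : ∀ x ∈ Ioo (Xp - ρ/4) (Xp + ρ/4),
      NEfree u v S (pt u v x (mu u v S Y₀ x)) ∨ NEfree (-u) v S (pt u v x (mu u v S Y₀ x)) := by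
    intro x hx
    exact label h hSc hLH ha hb rfl rfl rfl hY.symm hgap
      (by linarith [hx.1]) (by linarith [hx.2]) (hcolV x hx)
  by_cases hCe : ∃ x ∈ Ioo (Xp - ρ/4) (Xp + ρ/4), ∃ x' ∈ Ioo (Xp - ρ/4) (Xp + ρ/4),
      x < x' ∧ NEfree u v S (pt u v x (mu u v S Y₀ x)) ∧
        NEfree (-u) v S (pt u v x' (mu u v S Y₀ x'))
  · -- CEILING case
    obtain ⟨x, hxV, x', hx'V, hxx', hNE, hNW⟩ := hCe
    set m := mu u v S Y₀ x with hmdef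
    set m' := mu u v S Y₀ x' with hm'def
    have hmS : pt u v x m ∈ S := (mu_mem hSc (hcolV x hxV)).2
    have hm'S : pt u v x' m' ∈ S := (mu_mem hSc (hcolV x' hx'V)).2
    have hm'm : m ≤ m' := by
      by_contra hcon
      push_neg at hcon
      exact hNW _ hmS ⟨by rw [inner_neg_left, inner_neg_left, pt_inner₁ h, pt_inner₁ h]; linarith,
        by rw [pt_inner₂ h, pt_inner₂ h]; exact hcon⟩
    set z := (x + x')/2 with hzdef
    have hzV : z ∈ Ioo (Xp - ρ/4) (Xp + ρ/4) := by
      constructor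
      · rcases hxV with ⟨h1, _⟩; rcases hx'V with ⟨h2, _⟩; rw [hzdef]; linarith
      · rcases hxV with ⟨_, h1⟩; rcases hx'V with ⟨_, h2⟩; rw [hzdef]; linarith
    have hxz : x < z := by rw [hzdef]; linarith
    have hzx' : z < x' := by rw [hzdef]; linarith
    have hza : |z - Xp| ≤ ρ/4 := abs_le.mpr ⟨by linarith [hzV.1], by linarith [hzV.2]⟩
    have hup : pt u v z (Yp + ρ/2) ∈ S := by
      apply hball
      rw [Metric.mem_closedBall]
      have habs2 : |Yp + ρ/2 - Yp| = ρ/2 := by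
        rw [show Yp + ρ/2 - Yp = ρ/2 by ring]; exact abs_of_pos (by linarith)
      calc dist (pt u v z (Yp + ρ/2)) p = dist (pt u v z (Yp + ρ/2)) (pt u v Xp Yp) := by
            rw [pt_eq_self h p]
        _ ≤ |z - Xp| + |Yp + ρ/2 - Yp| := dist_pt_le h _ _ _ _
        _ ≤ ρ := by rw [habs2]; linarith [hza]
    have hlo : Yp - ρ/2 ∈ col u v S Y₀ z := by
      refine ⟨by linarith, hball ?_⟩
      rw [Metric.mem_closedBall]
      have habs2 : |Yp - ρ/2 - Yp| = ρ/2 := by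
        rw [show Yp - ρ/2 - Yp = -(ρ/2) by ring, abs_neg]; exact abs_of_pos (by linarith)
      calc dist (pt u v z (Yp - ρ/2)) p = dist (pt u v z (Yp - ρ/2)) (pt u v Xp Yp) := by
            rw [pt_eq_self h p]
        _ ≤ |z - Xp| + |Yp - ρ/2 - Yp| := dist_pt_le h _ _ _ _
        _ ≤ ρ := by rw [habs2]; linarith [hza]
    -- ceiling : anything in S above height m would enter the NE cone at (x, m)
    have hceil : Yp + ρ/2 ≤ m := by
      by_contra hcon
      push_neg at hcon
      exact hNE _ hup ⟨by rw [pt_inner₁ h, pt_inner₁ h]; exact hxz,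
        by rw [pt_inner₂ h, pt_inner₂ h]; exact hcon⟩
    -- the bottom of the column at z is at least m
    have hμz : m ≤ mu u v S Y₀ z := by
      rcases hlabel z hzV with hNEz | hNWz
      · by_contra hcon
        push_neg at hcon
        refine hNEz _ hm'S ⟨by rw [pt_inner₁ h, pt_inner₁ h]; exact hzx',
          by rw [pt_inner₂ h, pt_inner₂ h]; linarith⟩
      · by_contra hcon
        push_neg at hcon
        refine hNWz _ hmS ⟨by rw [inner_neg_left, inner_neg_left, pt_inner₁ h, pt_inner₁ h]; linarith,
          by rw [pt_inner₂ h, pt_inner₂ h]; exact hcon⟩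
    have := mu_le hlo
    linarith
  · -- no NE-point lies to the left of an NW-point in the window
    push_neg at hCe
    by_cases hA : ∀ x ∈ Ioo (Xp - ρ/4) (Xp + ρ/4), NEfree u v S (pt u v x (mu u v S Y₀ x))
    · exact pinch h hρpos hball hSc hYpρ (fun x h1 h2 => hA x ⟨by linarith, by linarith⟩)
    · push_neg at hA
      obtain ⟨x₀, hx₀V, hx₀NE⟩ := hA
      have hNWx₀ : NEfree (-u) v S (pt u v x₀ (mu u v S Y₀ x₀)) :=
        (hlabel x₀ hx₀V).resolve_left hx₀NE
      have hNWle : ∀ x ∈ Ioo (Xp - ρ/4) (Xp + ρ/4), x ≤ x₀ →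
          NEfree (-u) v S (pt u v x (mu u v S Y₀ x)) := by
        intro x hxV hxle
        rcases eq_or_lt_of_le hxle with heq | hlt
        · rw [heq]; exact hNWx₀
        · exact (hlabel x hxV).resolve_left (fun hNEx => hCe x hxV x₀ hx₀V hlt hNEx hNWx₀)
      obtain ⟨d, hd⟩ : ∃ d : ℝ, d = x₀ - (Xp - ρ/4) := ⟨_, rfl⟩
      have hdpos : 0 < d := by rw [hd]; rcases hx₀V with ⟨h1, _⟩; linarith
      obtain ⟨t, ht⟩ : ∃ t : ℝ, t = x₀ - d/2 := ⟨_, rfl⟩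
      obtain ⟨ρw, hρw⟩ : ∃ r : ℝ, r = min (ρ/4) (d/4) := ⟨_, rfl⟩
      have hρwpos : 0 < ρw := by
        rw [hρw]; exact lt_min (div_pos hρpos (by norm_num)) (div_pos hdpos (by norm_num))
      have hρw₁ : ρw ≤ ρ/4 := by rw [hρw]; exact min_le_left _ _
      have hρw₂ : ρw ≤ d/4 := by rw [hρw]; exact min_le_right _ _
      obtain ⟨pw, hpw⟩ : ∃ w : E2, w = pt u v t Yp := ⟨_, rfl⟩
      have htV : Xp - ρ/4 < t ∧ t < x₀ := by
        constructor
        · rw [ht]; rw [hd]; linarith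
        · rw [ht]; linarith
      have hballw : closedBall pw ρw ⊆ S := by
        intro w hw
        apply hball
        rw [Metric.mem_closedBall] at hw ⊢
        have hdpwp : dist pw p ≤ ρ/4 := by
          have hta : |t - Xp| ≤ ρ/4 := by
            rcases hx₀V with ⟨_, h2⟩
            exact abs_le.mpr ⟨by linarith [htV.1], by linarith [htV.2]⟩
          calc dist pw p = dist (pt u v t Yp) (pt u v Xp Yp) := by rw [hpw]; rw [pt_eq_self h p]
            _ ≤ |t - Xp| + |Yp - Yp| := dist_pt_le h _ _ _ _
            _ ≤ ρ/4 := by rw [sub_self, abs_zero, add_zero]; exact hta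
        calc dist w p ≤ dist w pw + dist pw p := dist_triangle _ _ _
          _ ≤ ρ := by linarith
      have hpwu : ⟪u,pw⟫ = t := by rw [hpw]; exact pt_inner₁ h _ _
      have hpwv : ⟪v,pw⟫ = Yp := by rw [hpw]; exact pt_inner₂ h _ _
      apply pinch h.negL hρwpos hballw hSc (Y₀ := Y₀)
      · rw [hpwv]; linarith
      · intro x' h1 h2
        rw [inner_neg_left, hpwu] at h1 h2
        rw [pt_negL, mu_negL]
        have hx'lt : -x' < t := by linarith [ht]
        apply hNWle (-x')
        · constructor
          · have hq4 : ρw/4 < d/2 := by linarith [hρw₂, hdpos]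
            have hgt : t - ρw/4 < -x' := by linarith [ht]
            have hXpd : Xp - ρ/4 = x₀ - d := by rw [hd]; ring
            rw [hXpd]
            linarith [ht]
          · linarith [htV.2, hx₀V.2]
        · linarith [htV.2, hx₀V.2]


/-- A gap on a line in direction `u` between two points of `S` is impossible. -/
lemma gapLemma {u v : E2} (h : ON u v) {S : Set E2} (hScomp : IsCompact S)
    (hbd : IsPathConnected (frontier S)) (hreg : S = closure (interior S))
    (hLH : LHform u v S)
    {c₁ c₃ z : E2} (hc1 : c₁ ∈ S) (hc3 : c₃ ∈ S) (hz : z ∉ S)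
    (hY1 : ⟪v,c₁⟫ = ⟪v,z⟫) (hY3 : ⟪v,c₃⟫ = ⟪v,z⟫)
    (hX1 : ⟪u,c₁⟫ < ⟪u,z⟫) (hX3 : ⟪u,z⟫ < ⟪u,c₃⟫) : False := by
  have hSc : IsClosed S := hScomp.isClosed
  set Y₀ := ⟪v,z⟫ with hY₀
  set S' : Set ℝ := {t : ℝ | pt u v t Y₀ ∈ S} with hS'
  have hS'c : IsClosed S' := by
    have hcont : Continuous (fun t : ℝ => pt u v t Y₀) := by
      unfold pt; fun_prop
    exact hSc.preimage hcont
  have ht1 : ⟪u,c₁⟫ ∈ S' := by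
    show pt u v ⟪u,c₁⟫ Y₀ ∈ S
    rw [← hY1, pt_eq_self h c₁]
    exact hc1
  have ht3 : ⟪u,c₃⟫ ∈ S' := by
    show pt u v ⟪u,c₃⟫ Y₀ ∈ S
    rw [← hY3, pt_eq_self h c₃]
    exact hc3
  have htz : ⟪u,z⟫ ∉ S' := by
    show pt u v ⟪u,z⟫ Y₀ ∈ S → False
    rw [hY₀, pt_eq_self h z]
    exact hz
  -- the left endpoint of the gap
  have hAcomp : IsCompact (S' ∩ Icc ⟪u,c₁⟫ ⟪u,z⟫) := isCompact_Icc.inter_left hS'c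
  have hAne : (S' ∩ Icc ⟪u,c₁⟫ ⟪u,z⟫).Nonempty := ⟨⟪u,c₁⟫, ht1, le_refl _, le_of_lt hX1⟩
  set α := sSup (S' ∩ Icc ⟪u,c₁⟫ ⟪u,z⟫) with hαdef
  have hαA : α ∈ S' ∩ Icc ⟪u,c₁⟫ ⟪u,z⟫ := hAcomp.sSup_mem hAne
  have hαS' : α ∈ S' := hαA.1
  have hαlt : α < ⟪u,z⟫ :=
    lt_of_le_of_ne hαA.2.2 (fun he => htz (he ▸ hαS'))
  have hgapL : ∀ x, α < x → x ≤ ⟪u,z⟫ → x ∉ S' := by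
    intro x hxa hxb hxS
    have hxA : x ∈ S' ∩ Icc ⟪u,c₁⟫ ⟪u,z⟫ := ⟨hxS, le_trans hαA.2.1 (le_of_lt hxa), hxb⟩
    exact absurd (le_csSup hAcomp.bddAbove hxA) (not_le.mpr hxa)
  -- the right endpoint of the gap
  have hBcomp : IsCompact (S' ∩ Icc ⟪u,z⟫ ⟪u,c₃⟫) := isCompact_Icc.inter_left hS'c
  have hBne : (S' ∩ Icc ⟪u,z⟫ ⟪u,c₃⟫).Nonempty := ⟨⟪u,c₃⟫, ht3, le_of_lt hX3, le_refl _⟩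
  set β := sInf (S' ∩ Icc ⟪u,z⟫ ⟪u,c₃⟫) with hβdef
  have hβB : β ∈ S' ∩ Icc ⟪u,z⟫ ⟪u,c₃⟫ := hBcomp.sInf_mem hBne
  have hβS' : β ∈ S' := hβB.1
  have hβgt : ⟪u,z⟫ < β :=
    lt_of_le_of_ne hβB.2.1 (fun he => htz (he ▸ hβS'))
  have hgapR : ∀ x, ⟪u,z⟫ ≤ x → x < β → x ∉ S' := by
    intro x hxa hxb hxS
    have hxB : x ∈ S' ∩ Icc ⟪u,z⟫ ⟪u,c₃⟫ := ⟨hxS, hxa, le_trans (le_of_lt hxb) hβB.2.2⟩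
    exact absurd (csInf_le hBcomp.bddBelow hxB) (not_le.mpr hxb)
  have hαβ : α < β := lt_trans hαlt hβgt
  set a := pt u v α Y₀ with hadef
  set b := pt u v β Y₀ with hbdef
  have haS : a ∈ S := hαS'
  have hbS : b ∈ S := hβS'
  have haX : ⟪u,a⟫ = α := pt_inner₁ h _ _
  have haY : ⟪v,a⟫ = Y₀ := pt_inner₂ h _ _
  have hbX : ⟪u,b⟫ = β := pt_inner₁ h _ _
  have hbY : ⟪v,b⟫ = Y₀ := pt_inner₂ h _ _
  have hgap : ∀ x, α < x → x < β → pt u v x Y₀ ∉ S := by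
    intro x hxa hxb
    rcases le_or_gt x ⟪u,z⟫ with hle | hgt
    · exact hgapL x hxa hle
    · exact hgapR x (le_of_lt hgt) hxb
  -- a and b are frontier points
  have hafr : a ∈ frontier S := by
    apply mem_frontier_of haS
    intro ε hε
    set x := min (α + ε/2) ((α + β)/2) with hxdef
    have hx1' : α < x := by
      rw [hxdef]; exact lt_min (by linarith) (by linarith)
    have hx2' : x < β := by
      rw [hxdef]
      calc min (α + ε/2) ((α + β)/2) ≤ (α + β)/2 := min_le_right _ _
        _ < β := by linarith
    refine ⟨pt u v x Y₀, hgap x hx1' hx2', ?_⟩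
    have hd := dist_pt_le h α Y₀ x Y₀
    have hxle : x ≤ α + ε/2 := by rw [hxdef]; exact min_le_left _ _
    calc dist a (pt u v x Y₀) ≤ |α - x| + |Y₀ - Y₀| := hd
      _ < ε := by
          rw [sub_self, abs_zero, add_zero, abs_of_neg (by linarith)]
          linarith
  have hbfr : b ∈ frontier S := by
    apply mem_frontier_of hbS
    intro ε hε
    set x := max (β - ε/2) ((α + β)/2) with hxdef
    have hx1' : α < x := by
      rw [hxdef]
      calc α < (α + β)/2 := by linarith
        _ ≤ max (β - ε/2) ((α + β)/2) := le_max_right _ _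
    have hx2' : x < β := by
      rw [hxdef]; exact max_lt (by linarith) (by linarith)
    refine ⟨pt u v x Y₀, hgap x hx1' hx2', ?_⟩
    have hd := dist_pt_le h β Y₀ x Y₀
    have hxle : β - ε/2 ≤ x := by rw [hxdef]; exact le_max_left _ _
    calc dist b (pt u v x Y₀) ≤ |β - x| + |Y₀ - Y₀| := hd
      _ < ε := by
          rw [sub_self, abs_zero, add_zero, abs_of_pos (by linarith)]
          linarith
  -- the boundary path from a to b and its crossing of the vertical mid-line
  obtain ⟨γ, hγ⟩ := hbd.joinedIn a hafr b hbfr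
  have hfc : ContinuousOn (fun t : ℝ => ⟪u, γ.extend t⟫) (Icc 0 1) := by
    apply Continuous.continuousOn
    exact (continuous_const.inner γ.continuous_extend)
  have hIVT := intermediate_value_Icc (zero_le_one) hfc
  have hf0 : ⟪u, γ.extend 0⟫ = α := by rw [γ.extend_zero]; exact haX
  have hf1 : ⟪u, γ.extend 1⟫ = β := by rw [γ.extend_one]; exact hbX
  have hmid : (α + β)/2 ∈ Icc ⟪u, γ.extend 0⟫ ⟪u, γ.extend 1⟫ := by
    rw [hf0, hf1]; exact ⟨by linarith, by linarith⟩
  obtain ⟨tc, htcI, htc⟩ := hIVT hmid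
  set w := γ.extend tc with hwdef
  have hwfr : w ∈ frontier S := by
    rw [hwdef, Path.extend_apply γ htcI]
    exact hγ _
  have hwS : w ∈ S := hSc.frontier_subset hwfr
  have hwX : ⟪u,w⟫ = (α + β)/2 := htc
  have hwY : ⟪v,w⟫ ≠ Y₀ := by
    intro hC
    apply hgap ((α + β)/2) (by linarith) (by linarith)
    have : pt u v ⟪u,w⟫ ⟪v,w⟫ = w := pt_eq_self h w
    rw [← hwX, ← hC, this]
    exact hwS
  rcases lt_or_gt_of_ne hwY with hlt | hgt
  · -- crossing below the gap line: flip `v`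
    refine gapCore h.negR hScomp hreg (LHform_negR hLH) haS hbS ?_ ?_ hwS ?_ ?_ ?_
    · rw [inner_neg_left, inner_neg_left, haY, hbY]
    · intro x hxa hxb
      rw [haX] at hxa
      rw [hbX] at hxb
      rw [pt_negR, inner_neg_left, haY, neg_neg]
      exact hgap x hxa hxb
    · rw [haX, hwX]; linarith
    · rw [hbX, hwX]; linarith
    · rw [inner_neg_left, inner_neg_left, haY]; linarith
  · -- crossing above the gap line
    refine gapCore h hScomp hreg hLH haS hbS ?_ ?_ hwS ?_ ?_ ?_
    · rw [haY, hbY]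
    · intro x hxa hxb
      rw [haX] at hxa
      rw [hbX] at hxb
      rw [haY]
      exact hgap x hxa hxb
    · rw [haX, hwX]; linarith
    · rw [hbX, hwX]; linarith
    · rw [haY]; linarith

/-- Convexity of sections along lines in direction `u`. -/
lemma lineConv {u v : E2} (h : ON u v) {S : Set E2} (hScomp : IsCompact S)
    (hbd : IsPathConnected (frontier S)) (hreg : S = closure (interior S))
    (hLH : LHform u v S) (p : E2) : Convex ℝ (lineThru p u ∩ S) := by
  by_contra hnc
  rw [convex_iff_forall_pos] at hnc
  push_neg at hnc
  obtain ⟨x, hx, y, hy, aa, bb, haa, hbb, hab, hxyS⟩ := hnc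
  obtain ⟨t₁, hx1⟩ := hx.1
  obtain ⟨t₂, hy1⟩ := hy.1
  have hline_coords : ∀ (w : E2) (s : ℝ), w = p + s • u →
      ⟪u,w⟫ = ⟪u,p⟫ + s ∧ ⟪v,w⟫ = ⟪v,p⟫ := by
    intro w s hw
    constructor
    · rw [hw, inner_add_right, real_inner_smul_right, h.huu, mul_one]
    · rw [hw, inner_add_right, real_inner_smul_right, h.hvu, mul_zero, add_zero]
  have hcombo : aa • x + bb • y = p + (aa * t₁ + bb * t₂) • u := by
    rw [hx1, hy1]
    have h1 : aa • (p + t₁ • u) + bb • (p + t₂ • u)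
        = (aa + bb) • p + (aa * t₁ + bb * t₂) • u := by module
    rw [h1, hab, one_smul]
  have hzS : aa • x + bb • y ∉ S := fun hS => hxyS ⟨⟨_, hcombo⟩, hS⟩
  obtain ⟨hXx, hYx⟩ := hline_coords x t₁ hx1
  obtain ⟨hXy, hYy⟩ := hline_coords y t₂ hy1
  obtain ⟨hXz, hYz⟩ := hline_coords _ _ hcombo
  rcases lt_trichotomy t₁ t₂ with hlt | heq | hgt
  · have hkey : aa * t₁ + bb * t₂ = t₁ + bb * (t₂ - t₁) := by linear_combination t₁ * hab
    have hmp := mul_pos hbb (sub_pos.mpr hlt)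
    have hmp2 := mul_pos haa (sub_pos.mpr hlt)
    have hid : aa * (t₂ - t₁) + bb * (t₂ - t₁) = t₂ - t₁ := by
      linear_combination (t₂ - t₁) * hab
    refine gapLemma h hScomp hbd hreg hLH hx.2 hy.2 hzS ?_ ?_ ?_ ?_
    · rw [hYx, hYz]
    · rw [hYy, hYz]
    · rw [hXz, hXx, hkey]; linarith
    · rw [hXz, hXy, hkey]; linarith
  · exfalso
    apply hzS
    have hxy : x = y := by rw [hx1, hy1, heq]
    rw [hxy, ← add_smul, hab, one_smul]
    exact hy.2
  · have hkey : aa * t₁ + bb * t₂ = t₂ + aa * (t₁ - t₂) := by linear_combination t₂ * hab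
    have hmp := mul_pos haa (sub_pos.mpr hgt)
    have hmp2 := mul_pos hbb (sub_pos.mpr hgt)
    have hid : aa * (t₁ - t₂) + bb * (t₁ - t₂) = t₁ - t₂ := by
      linear_combination (t₁ - t₂) * hab
    refine gapLemma h hScomp hbd hreg hLH hy.2 hx.2 hzS ?_ ?_ ?_ ?_
    · rw [hYy, hYz]
    · rw [hYx, hYz]
    · rw [hXz, hXy, hkey]; linarith
    · rw [hXz, hXx, hkey]; linarith

end LH

/-- a compact regular set which is a `π/2`-lighthouse with the
four diagonal axes (every boundary point has an empty open quadrant-cone with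
sides parallel to `b₁, b₂`) is biconvex wrt `b₁, b₂`. -/
theorem lighthouse_biconvex (S : Set E2) (hScomp : IsCompact S)
    (hbd : IsPathConnected (frontier S)) (hreg : S = closure (interior S))
    (b₁ b₂ : E2) (hb₁ : ‖b₁‖ = 1) (hb₂ : ‖b₂‖ = 1) (horth : ⟪b₁, b₂⟫ = 0)
    (hlh : ∀ x ∈ frontier S, ∃ C ∈ QuadrantCones b₁ b₂ x, C ∩ S = ∅) :
    Biconvex b₁ b₂ S := by
  have hON : LH.ON b₁ b₂ := ⟨hb₁, hb₂, horth⟩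
  have hLH := LH.LHform_of_hlh hON hlh
  intro p
  exact ⟨LH.lineConv hON hScomp hbd hreg hLH p,
    LH.lineConv hON.symm hScomp hbd hreg (LH.LHform_swap hLH) p⟩
end
end

section
/- Let S ⊆ ℝ² be a compact set with path-connected boundary satisfying S = closure(interior(S)). If S is biconvex with respect to orthogonal unit vectors b₁, b₂, then for every point t ∉ S there exist i ∈ {0,1,2,3} and y ∈ ℝ² such that t lies in the open quadrant-cone C_{Rⁱξ}(y) with ξ = (b₁+b₂)/‖b₁+b₂‖, and this cone is disjoint from S (the π/2-lighthouse-by-complements property). -/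
noncomputable section

open Set Metric MeasureTheory Filter Real
open scoped RealInnerProductSpace Topology symmDiff

/-! ### Auxiliary lemmas -/

/-- Two orthonormal vectors in the plane form a basis: points with equal coordinates
coincide. -/
lemma coord_eq (c₁ c₂ : E2) (hc₁ : ‖c₁‖ = 1) (hc₂ : ‖c₂‖ = 1) (horth : ⟪c₁, c₂⟫ = 0)
    {x y : E2} (h1 : ⟪x, c₁⟫ = ⟪y, c₁⟫) (h2 : ⟪x, c₂⟫ = ⟪y, c₂⟫) : x = y := by
  have hcc₁ : ⟪c₁, c₁⟫ = (1:ℝ) := by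
    rw [real_inner_self_eq_norm_mul_norm, hc₁]; ring
  have hcc₂ : ⟪c₂, c₂⟫ = (1:ℝ) := by
    rw [real_inner_self_eq_norm_mul_norm, hc₂]; ring
  have horth' : ⟪c₂, c₁⟫ = 0 := by rw [real_inner_comm]; exact horth
  have hon : Orthonormal ℝ ![c₁, c₂] := by
    rw [orthonormal_iff_ite]
    intro i j
    fin_cases i <;> fin_cases j <;>
      norm_num [Matrix.cons_val_zero, Matrix.cons_val_one, Matrix.head_cons, hcc₁, hcc₂,
        horth, horth', hc₁, hc₂]
  have hli := hon.linearIndependent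
  have hcard : Fintype.card (Fin 2) = Module.finrank ℝ E2 := by
    simp [finrank_euclideanSpace_fin]
  have hspan := hli.span_eq_top_of_card_eq_finrank hcard
  have hmem : x - y ∈ Submodule.span ℝ (Set.range ![c₁, c₂]) := by
    rw [hspan]; trivial
  rw [Submodule.mem_span_range_iff_exists_fun] at hmem
  obtain ⟨c, hc⟩ := hmem
  rw [Fin.sum_univ_two] at hc
  simp only [Matrix.cons_val_zero, Matrix.cons_val_one, Matrix.head_cons] at hc
  have e1 : ⟪x - y, c₁⟫ = 0 := by rw [inner_sub_left, h1]; ring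
  have e2 : ⟪x - y, c₂⟫ = 0 := by rw [inner_sub_left, h2]; ring
  have hc0 : c 0 = 0 := by
    have := e1
    rw [← hc, inner_add_left, real_inner_smul_left, real_inner_smul_left, hcc₁, horth'] at this
    linarith
  have hc1 : c 1 = 0 := by
    have := e2
    rw [← hc, inner_add_left, real_inner_smul_left, real_inner_smul_left, hcc₂, horth] at this
    linarith
  have : x - y = 0 := by rw [← hc, hc0, hc1]; simp
  exact sub_eq_zero.mp this

/-- A preconnected set meeting a closed set and its complement meets the frontier. -/
lemma meets_frontier {K S : Set E2} (hK : IsPreconnected K) (hS : IsClosed S)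
    (h1 : (K ∩ S).Nonempty) (h2 : (K ∩ Sᶜ).Nonempty) : (K ∩ frontier S).Nonempty := by
  by_contra h
  rw [not_nonempty_iff_eq_empty] at h
  have hcover : K ⊆ interior S ∪ (closure S)ᶜ := by
    intro x hx
    by_cases hxS : x ∈ S
    · left
      have : x ∉ frontier S := fun hf => (not_nonempty_iff_eq_empty.mpr h) ⟨x, hx, hf⟩
      have hxcl : x ∈ closure S := subset_closure hxS
      rw [frontier, mem_diff] at this
      push_neg at this
      exact this hxcl
    · right
      rw [hS.closure_eq]; exact hxS
  have h1' : (K ∩ interior S).Nonempty := by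
    obtain ⟨x, hxK, hxS⟩ := h1
    rcases hcover hxK with h | h
    · exact ⟨x, hxK, h⟩
    · exact absurd (by rw [hS.closure_eq]; exact hxS) h
  have h2' : (K ∩ (closure S)ᶜ).Nonempty := by
    obtain ⟨x, hxK, hxS⟩ := h2
    rcases hcover hxK with h | h
    · exact absurd (interior_subset h) hxS
    · exact ⟨x, hxK, h⟩
  obtain ⟨x, hxK, hxi, hxc⟩ := hK (interior S) (closure S)ᶜ isOpen_interior
    (isOpen_compl_iff.mpr isClosed_closure) hcover h1' h2'
  exact hxc (subset_closure (interior_subset hxi))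

/-- From a point of `S` in a closed quadrant, get a frontier point in the quadrant. -/
lemma frontier_pt {S : Set E2} (hSc : IsClosed S) (hSb : Bornology.IsBounded S)
    (c₁ c₂ : E2) (hc₂ : ‖c₂‖ = 1) (horth : ⟪c₂, c₁⟫ = 0)
    (a b : ℝ) {q : E2} (hq : q ∈ S) (hf : a ≤ ⟪q, c₁⟫) (hg : b ≤ ⟪q, c₂⟫) :
    ∃ p ∈ frontier S, a ≤ ⟪p, c₁⟫ ∧ b ≤ ⟪p, c₂⟫ := by
  set K : Set E2 := {x | a ≤ ⟪x, c₁⟫ ∧ b ≤ ⟪x, c₂⟫} with hKdef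
  have hKconv : Convex ℝ K := by
    intro x hx y hy lam mu hlam hmu hlm
    have ha : ∀ r : ℝ, lam * r + mu * r = r := by
      intro r; rw [← add_mul, hlm, one_mul]
    constructor
    · have h : ⟪lam • x + mu • y, c₁⟫ = lam * ⟪x, c₁⟫ + mu * ⟪y, c₁⟫ := by
        rw [inner_add_left, real_inner_smul_left, real_inner_smul_left]
      rw [Set.mem_setOf_eq] at hx hy
      rw [h]
      have e1 := mul_le_mul_of_nonneg_left hx.1 hlam
      have e2 := mul_le_mul_of_nonneg_left hy.1 hmu
      linarith [ha a]
    · have h : ⟪lam • x + mu • y, c₂⟫ = lam * ⟪x, c₂⟫ + mu * ⟪y, c₂⟫ := by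
        rw [inner_add_left, real_inner_smul_left, real_inner_smul_left]
      rw [Set.mem_setOf_eq] at hx hy
      rw [h]
      have e1 := mul_le_mul_of_nonneg_left hx.2 hlam
      have e2 := mul_le_mul_of_nonneg_left hy.2 hmu
      linarith [ha b]
  obtain ⟨M, hM⟩ := hSb.exists_norm_le
  set R : ℝ := M + ‖q‖ + 1 with hR
  have hRpos : 0 < R := by
    have := norm_nonneg q
    have hM0 : 0 ≤ M := le_trans (norm_nonneg q) (hM q hq)
    positivity
  set z : E2 := q + R • c₂ with hz
  have hzK : z ∈ K := by
    constructor
    · rw [hz, inner_add_left, real_inner_smul_left, horth]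
      simpa using hf
    · rw [hz, inner_add_left, real_inner_smul_left]
      have : ⟪c₂, c₂⟫ = (1:ℝ) := by
        rw [real_inner_self_eq_norm_mul_norm, hc₂]; ring
      rw [this]
      nlinarith
  have hznS : z ∉ S := by
    intro hzS
    have h1 : ‖z‖ ≤ M := hM z hzS
    have h2 : R - ‖q‖ ≤ ‖z‖ := by
      have h3 := norm_sub_norm_le (R • c₂) (q + R • c₂)
      have h4 : R • c₂ - (q + R • c₂) = -q := by abel
      rw [h4, norm_neg, norm_smul, hc₂, mul_one, Real.norm_eq_abs, abs_of_pos hRpos] at h3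
      rw [hz]
      linarith
    have hM0 : 0 ≤ M := le_trans (norm_nonneg q) (hM q hq)
    rw [hR] at h2
    linarith
  have := meets_frontier hKconv.isPreconnected hSc ⟨q, ⟨hf, hg⟩, hq⟩ ⟨z, hzK, hznS⟩
  obtain ⟨p, hpK, hpf⟩ := this
  exact ⟨p, hpf, hpK.1, hpK.2⟩

/-- The crossing lemma: a frontier path from the open right half (starting above level `b`)
to the open left half must cross level `b` while still strictly to the right, provided all
frontier points on the dividing vertical line lie strictly below level `b`. -/
lemma crossing {S : Set E2} (hScl : IsClosed S) (hbd : IsPathConnected (frontier S))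
    (c₁ c₂ : E2) (a b : ℝ)
    {q₁ q₂ : E2} (hq₁ : q₁ ∈ frontier S) (hq₂ : q₂ ∈ frontier S)
    (hf₁ : a < ⟪q₁, c₁⟫) (hg₁ : b ≤ ⟪q₁, c₂⟫) (hf₂ : ⟪q₂, c₁⟫ < a)
    (hcol : ∀ x ∈ S, ⟪x, c₁⟫ = a → ⟪x, c₂⟫ < b) :
    ∃ w ∈ S, ⟪w, c₂⟫ = b ∧ a < ⟪w, c₁⟫ := by
  obtain ⟨γ, hγ⟩ := hbd.joinedIn q₁ hq₁ q₂ hq₂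
  set φ : ℝ → E2 := (γ.extend : ℝ → E2) with hφ
  have hφc : Continuous φ := γ.continuous_extend
  have hmem : ∀ τ ∈ Icc (0:ℝ) 1, φ τ ∈ frontier S := by
    intro τ hτ
    rw [hφ, γ.extend_apply hτ]
    exact hγ _
  have hfc : Continuous fun τ => ⟪φ τ, c₁⟫ := hφc.inner continuous_const
  have hgc : Continuous fun τ => ⟪φ τ, c₂⟫ := hφc.inner continuous_const
  have hφ0 : φ 0 = q₁ := γ.extend_zero
  have hφ1 : φ 1 = q₂ := γ.extend_one
  set T : Set ℝ := {τ ∈ Icc (0:ℝ) 1 | ⟪φ τ, c₁⟫ ≤ a} with hT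
  have hT1 : (1:ℝ) ∈ T := ⟨⟨zero_le_one, le_refl 1⟩, by rw [hφ1]; exact le_of_lt hf₂⟩
  have hTcl : IsClosed T := by
    have : T = Icc (0:ℝ) 1 ∩ (fun τ => ⟪φ τ, c₁⟫) ⁻¹' Iic a := by
      ext τ; simp [hT, Set.mem_sep_iff]
    rw [this]
    exact isClosed_Icc.inter (isClosed_Iic.preimage hfc)
  have hTbdd : BddBelow T := ⟨0, fun τ hτ => hτ.1.1⟩
  set τ₀ : ℝ := sInf T with hτ₀
  have hτ₀T : τ₀ ∈ T := hTcl.csInf_mem ⟨1, hT1⟩ hTbdd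
  have hτ₀mem : τ₀ ∈ Icc (0:ℝ) 1 := hτ₀T.1
  have heq : ⟪φ τ₀, c₁⟫ = a := by
    rcases lt_or_eq_of_le hτ₀T.2 with hlt | h
    · exfalso
      have hiv := intermediate_value_Icc' hτ₀mem.1 (hfc.continuousOn (s := Icc 0 τ₀))
      have : a ∈ Icc ⟪φ τ₀, c₁⟫ ⟪φ 0, c₁⟫ := by
        rw [hφ0]; exact ⟨le_of_lt hlt, le_of_lt hf₁⟩
      obtain ⟨τ₁, hτ₁mem, hτ₁eq⟩ := hiv this
      have hτ₁T : τ₁ ∈ T := ⟨⟨hτ₁mem.1, le_trans hτ₁mem.2 hτ₀mem.2⟩, le_of_eq hτ₁eq⟩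
      have h1 := csInf_le hTbdd hτ₁T
      have h2 : τ₁ = τ₀ := le_antisymm hτ₁mem.2 h1
      rw [h2] at hτ₁eq
      exact absurd hτ₁eq (ne_of_lt hlt)
    · exact h
  have hφτ₀S : φ τ₀ ∈ S := hScl.frontier_subset (hmem τ₀ hτ₀mem)
  have hgτ₀ : ⟪φ τ₀, c₂⟫ < b := hcol _ hφτ₀S heq
  have hiv := intermediate_value_Icc' hτ₀mem.1 (hgc.continuousOn (s := Icc 0 τ₀))
  have hbmem : b ∈ Icc ⟪φ τ₀, c₂⟫ ⟪φ 0, c₂⟫ := by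
    rw [hφ0]; exact ⟨le_of_lt hgτ₀, hg₁⟩
  obtain ⟨σ, hσmem, hσeq⟩ := hiv hbmem
  have hσne : σ ≠ τ₀ := by
    intro h
    have : ⟪φ τ₀, c₂⟫ = b := by rw [← h]; exact hσeq
    rw [this] at hgτ₀; exact lt_irrefl b hgτ₀
  have hσlt : σ < τ₀ := lt_of_le_of_ne hσmem.2 hσne
  have hσnT : σ ∉ T := fun h => absurd (csInf_le hTbdd h) (not_le.mpr hσlt)
  have hσIcc : σ ∈ Icc (0:ℝ) 1 := ⟨hσmem.1, le_trans hσmem.2 hτ₀mem.2⟩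
  have hfσ : a < ⟪φ σ, c₁⟫ := by
    by_contra h
    push_neg at h
    exact hσnT ⟨hσIcc, h⟩
  exact ⟨φ σ, hScl.frontier_subset (hmem σ hσIcc), hσeq, hfσ⟩

lemma combo (X Y A : ℝ) (h : X - Y ≠ 0) :
    (A - Y) / (X - Y) * X + (1 - (A - Y) / (X - Y)) * Y = A := by
  field_simp
  ring

/-- If two points of `S` lie on the line through `t` in direction `c₁`, on either side of
`t`, then `t ∈ S` (by convexity of the section). -/
lemma between (c₁ c₂ : E2) (hc₁ : ‖c₁‖ = 1) (hc₂ : ‖c₂‖ = 1) (horth : ⟪c₁, c₂⟫ = 0)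
    {S : Set E2} {t : E2} (hconv : Convex ℝ (lineThru t c₁ ∩ S))
    {w₁ w₂ : E2} (hw₁S : w₁ ∈ S) (hw₂S : w₂ ∈ S)
    (hg₁ : ⟪w₁, c₂⟫ = ⟪t, c₂⟫) (hg₂ : ⟪w₂, c₂⟫ = ⟪t, c₂⟫)
    (hf₁ : ⟪t, c₁⟫ < ⟪w₁, c₁⟫) (hf₂ : ⟪w₂, c₁⟫ < ⟪t, c₁⟫) : t ∈ S := by
  have hcc₁ : ⟪c₁, c₁⟫ = (1:ℝ) := by rw [real_inner_self_eq_norm_mul_norm, hc₁]; ring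
  have hline : ∀ w : E2, ⟪w, c₂⟫ = ⟪t, c₂⟫ → w ∈ lineThru t c₁ := by
    intro w hw
    refine ⟨⟪w, c₁⟫ - ⟪t, c₁⟫, ?_⟩
    apply coord_eq c₁ c₂ hc₁ hc₂ horth
    · rw [inner_add_left, real_inner_smul_left, hcc₁]; ring
    · rw [inner_add_left, real_inner_smul_left, horth, hw]; ring
  set lam : ℝ := (⟪t, c₁⟫ - ⟪w₂, c₁⟫) / (⟪w₁, c₁⟫ - ⟪w₂, c₁⟫) with hlam
  have hdpos : 0 < ⟪w₁, c₁⟫ - ⟪w₂, c₁⟫ := by linarith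
  have hdne : ⟪w₁, c₁⟫ - ⟪w₂, c₁⟫ ≠ 0 := ne_of_gt hdpos
  have hl0 : 0 ≤ lam := div_nonneg (by linarith) (le_of_lt hdpos)
  have hl1 : lam ≤ 1 := by
    rw [hlam, div_le_one hdpos]; linarith
  have hteq : t = lam • w₁ + (1 - lam) • w₂ := by
    apply coord_eq c₁ c₂ hc₁ hc₂ horth
    · rw [inner_add_left, real_inner_smul_left, real_inner_smul_left, hlam]
      exact (combo _ _ _ hdne).symm
    · rw [inner_add_left, real_inner_smul_left, real_inner_smul_left, hg₁, hg₂]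
      ring
  have := hconv (a := lam) (b := 1 - lam) ⟨hline w₁ hg₁, hw₁S⟩ ⟨hline w₂ hg₂, hw₂S⟩ hl0
    (by linarith) (by ring)
  rw [← hteq] at this
  exact this.2

/-- The central case analysis: if `t ∉ S`, all points of `S` on the vertical line through
`t` are strictly below `t`, and both upper closed quadrants at `t` meet `S`, we get a
contradiction. -/
lemma qcase {S : Set E2} (hScl : IsClosed S) (hSb : Bornology.IsBounded S)
    (hbd : IsPathConnected (frontier S))
    (c₁ c₂ : E2) (hc₁ : ‖c₁‖ = 1) (hc₂ : ‖c₂‖ = 1) (horth : ⟪c₁, c₂⟫ = 0)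
    {t : E2} (hrow : Convex ℝ (lineThru t c₁ ∩ S)) (ht : t ∉ S)
    (hcol : ∀ x ∈ S, ⟪x, c₁⟫ = ⟪t, c₁⟫ → ⟪x, c₂⟫ < ⟪t, c₂⟫)
    (hqp : ∃ q ∈ S, ⟪t, c₁⟫ ≤ ⟪q, c₁⟫ ∧ ⟪t, c₂⟫ ≤ ⟪q, c₂⟫)
    (hqm : ∃ q ∈ S, ⟪q, c₁⟫ ≤ ⟪t, c₁⟫ ∧ ⟪t, c₂⟫ ≤ ⟪q, c₂⟫) : False := by
  set a : ℝ := ⟪t, c₁⟫ with ha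
  set b : ℝ := ⟪t, c₂⟫ with hb
  have horth' : ⟪c₂, c₁⟫ = 0 := by rw [real_inner_comm]; exact horth
  -- frontier point in upper-right quadrant
  obtain ⟨q, hqS, hqf, hqg⟩ := hqp
  obtain ⟨p₁, hp₁F, hp₁f, hp₁g⟩ := frontier_pt hScl hSb c₁ c₂ hc₂ horth' a b hqS hqf hqg
  have hp₁S : p₁ ∈ S := hScl.frontier_subset hp₁F
  have hp₁f' : a < ⟪p₁, c₁⟫ := by
    rcases lt_or_eq_of_le hp₁f with h | h
    · exact h
    · exact absurd (hcol p₁ hp₁S h.symm) (not_lt.mpr hp₁g)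
  -- frontier point in upper-left quadrant
  obtain ⟨q', hq'S, hq'f, hq'g⟩ := hqm
  have hq'f2 : -a ≤ ⟪q', -c₁⟫ := by rw [inner_neg_right]; linarith
  have horth2 : ⟪c₂, -c₁⟫ = 0 := by rw [inner_neg_right, horth']; ring
  obtain ⟨p₂, hp₂F, hp₂f, hp₂g⟩ :=
    frontier_pt hScl hSb (-c₁) c₂ hc₂ horth2 (-a) b hq'S hq'f2 hq'g
  have hp₂S : p₂ ∈ S := hScl.frontier_subset hp₂F
  have hp₂fa : ⟪p₂, c₁⟫ ≤ a := by rw [inner_neg_right] at hp₂f; linarith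
  have hp₂f' : ⟪p₂, c₁⟫ < a := by
    rcases lt_or_eq_of_le hp₂fa with h | h
    · exact h
    · exact absurd (hcol p₂ hp₂S h) (not_lt.mpr hp₂g)
  -- two crossings
  obtain ⟨w₁, hw₁S, hw₁g, hw₁f⟩ :=
    crossing hScl hbd c₁ c₂ a b hp₁F hp₂F hp₁f' hp₁g hp₂f' hcol
  have hcol2 : ∀ x ∈ S, ⟪x, -c₁⟫ = -a → ⟪x, c₂⟫ < b := by
    intro x hx h
    rw [inner_neg_right, neg_inj] at h
    exact hcol x hx h
  have hp₂f2 : -a < ⟪p₂, -c₁⟫ := by rw [inner_neg_right]; linarith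
  have hp₁f2 : ⟪p₁, -c₁⟫ < -a := by rw [inner_neg_right]; linarith
  obtain ⟨w₂, hw₂S, hw₂g, hw₂f⟩ :=
    crossing hScl hbd (-c₁) c₂ (-a) b hp₂F hp₁F hp₂f2 hp₂g hp₁f2 hcol2
  have hw₂f' : ⟪w₂, c₁⟫ < a := by rw [inner_neg_right] at hw₂f; linarith
  exact ht (between c₁ c₂ hc₁ hc₂ horth hrow hw₁S hw₂S hw₁g hw₂g hw₁f hw₂f')

/-- a compact regular biconvex set has the `π/2`-lighthouse-by-
complements property: every point outside `S` lies in an open quadrant-cone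
(with sides parallel to `b₁, b₂`) disjoint from `S`. -/
theorem biconvex_lighthouse_compl (S : Set E2) (hScomp : IsCompact S)
    (hbd : IsPathConnected (frontier S)) (hreg : S = closure (interior S))
    (b₁ b₂ : E2) (hb₁ : ‖b₁‖ = 1) (hb₂ : ‖b₂‖ = 1) (horth : ⟪b₁, b₂⟫ = 0)
    (hbc : Biconvex b₁ b₂ S) :
    ∀ t : E2, t ∉ S → ∃ (y : E2) (C : Set E2),
      C ∈ QuadrantCones b₁ b₂ y ∧ t ∈ C ∧ C ∩ S = ∅ := by
  intro t ht
  have hScl : IsClosed S := hScomp.isClosed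
  have hSb : Bornology.IsBounded S := hScomp.isBounded
  have hcc₁ : ⟪b₁, b₁⟫ = (1:ℝ) := by rw [real_inner_self_eq_norm_mul_norm, hb₁]; ring
  have hcc₂ : ⟪b₂, b₂⟫ = (1:ℝ) := by rw [real_inner_self_eq_norm_mul_norm, hb₂]; ring
  have horth' : ⟪b₂, b₁⟫ = 0 := by rw [real_inner_comm]; exact horth
  rcases Set.eq_empty_or_nonempty S with hSe | hSne
  · refine ⟨t - b₁ - b₂, Quadrant (t - b₁ - b₂) b₁ b₂, ?_, ⟨1, 1, one_pos, one_pos, by module⟩, ?_⟩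
    · left; rfl
    · rw [hSe]; exact Set.inter_empty _
  -- Q-convexity step
  have key : ∃ σ τ : ℝ, (σ = 1 ∨ σ = -1) ∧ (τ = 1 ∨ τ = -1) ∧
      ∀ x ∈ S, σ * ⟪x, b₁⟫ < σ * ⟪t, b₁⟫ ∨ τ * ⟪x, b₂⟫ < τ * ⟪t, b₂⟫ := by
    by_contra hcon
    push_neg at hcon
    obtain ⟨x11, hx11S, h11⟩ := hcon 1 1 (Or.inl rfl) (Or.inl rfl)
    obtain ⟨xm1, hxm1S, hm1⟩ := hcon (-1) 1 (Or.inr rfl) (Or.inl rfl)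
    obtain ⟨x1m, hx1mS, h1m⟩ := hcon 1 (-1) (Or.inl rfl) (Or.inr rfl)
    obtain ⟨xmm, hxmmS, hmm⟩ := hcon (-1) (-1) (Or.inr rfl) (Or.inr rfl)
    by_cases hA : ∀ x ∈ S, ⟪x, b₁⟫ = ⟪t, b₁⟫ → ⟪x, b₂⟫ < ⟪t, b₂⟫
    · exact qcase hScl hSb hbd b₁ b₂ hb₁ hb₂ horth (hbc t).1 ht hA
        ⟨x11, hx11S, by linarith [h11.1], by linarith [h11.2]⟩
        ⟨xm1, hxm1S, by linarith [hm1.1], by linarith [hm1.2]⟩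
    by_cases hB : ∀ x ∈ S, ⟪x, b₁⟫ = ⟪t, b₁⟫ → ⟪t, b₂⟫ < ⟪x, b₂⟫
    · have hc₂' : ‖-b₂‖ = 1 := by rw [norm_neg]; exact hb₂
      have horth2 : ⟪b₁, -b₂⟫ = 0 := by rw [inner_neg_right, horth]; ring
      have hB' : ∀ x ∈ S, ⟪x, b₁⟫ = ⟪t, b₁⟫ → ⟪x, -b₂⟫ < ⟪t, -b₂⟫ := by
        intro x hx h
        rw [inner_neg_right, inner_neg_right]
        have := hB x hx h
        linarith
      have e1 : ⟪t, -b₂⟫ ≤ ⟪x1m, -b₂⟫ := by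
        rw [inner_neg_right, inner_neg_right]; linarith [h1m.2]
      have e2 : ⟪t, -b₂⟫ ≤ ⟪xmm, -b₂⟫ := by
        rw [inner_neg_right, inner_neg_right]; linarith [hmm.2]
      exact qcase hScl hSb hbd b₁ (-b₂) hb₁ hc₂' horth2 (hbc t).1 ht hB'
        ⟨x1m, hx1mS, by linarith [h1m.1], e1⟩
        ⟨xmm, hxmmS, by linarith [hmm.1], e2⟩
    · push_neg at hA hB
      obtain ⟨u₁, hu₁S, hu₁f, hu₁g⟩ := hA
      obtain ⟨u₂, hu₂S, hu₂f, hu₂g⟩ := hB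
      have hu₁g' : ⟪t, b₂⟫ < ⟪u₁, b₂⟫ := by
        rcases lt_or_eq_of_le hu₁g with h | h
        · exact h
        · exact absurd (coord_eq b₁ b₂ hb₁ hb₂ horth hu₁f h.symm ▸ hu₁S) ht
      have hu₂g' : ⟪u₂, b₂⟫ < ⟪t, b₂⟫ := by
        rcases lt_or_eq_of_le hu₂g with h | h
        · exact h
        · exact absurd (coord_eq b₁ b₂ hb₁ hb₂ horth hu₂f h ▸ hu₂S) ht
      exact ht (between b₂ b₁ hb₂ hb₁ horth' (hbc t).2 hu₁S hu₂S hu₁f hu₂f hu₁g' hu₂g')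
  obtain ⟨σ, τ, hsσ, hsτ, hkey⟩ := key
  have hσ2 : σ * σ = 1 := by rcases hsσ with h | h <;> rw [h] <;> norm_num
  have hτ2 : τ * τ = 1 := by rcases hsτ with h | h <;> rw [h] <;> norm_num
  set a : ℝ := ⟪t, b₁⟫ with ha
  set b : ℝ := ⟪t, b₂⟫ with hb
  -- positive margin by compactness
  set h : E2 → ℝ := fun x => max (σ * (a - ⟪x, b₁⟫)) (τ * (b - ⟪x, b₂⟫)) with hh
  have hcont : Continuous h := by
    apply Continuous.max
    · exact continuous_const.mul (continuous_const.sub (continuous_id.inner continuous_const))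
    · exact continuous_const.mul (continuous_const.sub (continuous_id.inner continuous_const))
  obtain ⟨x₀, hx₀S, hx₀min⟩ := hScomp.exists_isMinOn hSne hcont.continuousOn
  set δ : ℝ := h x₀ with hδ
  have hδpos : 0 < δ := by
    rcases hkey x₀ hx₀S with hcase | hcase
    · have h1 : 0 < σ * (a - ⟪x₀, b₁⟫) := by
        have : σ * (a - ⟪x₀, b₁⟫) = σ * a - σ * ⟪x₀, b₁⟫ := by ring
        rw [this]; linarith
      exact lt_of_lt_of_le h1 (le_max_left _ _)
    · have h1 : 0 < τ * (b - ⟪x₀, b₂⟫) := by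
        have : τ * (b - ⟪x₀, b₂⟫) = τ * b - τ * ⟪x₀, b₂⟫ := by ring
        rw [this]; linarith
      exact lt_of_lt_of_le h1 (le_max_right _ _)
  set y : E2 := t - (σ * δ) • b₁ - (τ * δ) • b₂ with hy
  have hfy : ⟪y, b₁⟫ = a - σ * δ := by
    rw [hy, inner_sub_left, inner_sub_left, real_inner_smul_left, real_inner_smul_left,
      hcc₁, horth']
    ring
  have hgy : ⟪y, b₂⟫ = b - τ * δ := by
    rw [hy, inner_sub_left, inner_sub_left, real_inner_smul_left, real_inner_smul_left,
      hcc₂, horth]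
    ring
  refine ⟨y, Quadrant y (σ • b₁) (τ • b₂), ?_, ?_, ?_⟩
  · rcases hsσ with h1 | h1 <;> rcases hsτ with h2 | h2 <;> rw [h1, h2] <;>
      simp only [one_smul, neg_one_smul, QuadrantCones, Set.mem_insert_iff,
        Set.mem_singleton_iff] <;> tauto
  · refine ⟨δ, δ, hδpos, hδpos, ?_⟩
    rw [hy]
    module
  · rw [Set.eq_empty_iff_forall_notMem]
    rintro x ⟨⟨s, u, hs, hu, hxeq⟩, hxS⟩
    have hfx : ⟪x, b₁⟫ = ⟪y, b₁⟫ + s * σ := by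
      rw [hxeq, inner_add_left, inner_add_left, real_inner_smul_left, real_inner_smul_left,
        real_inner_smul_left, real_inner_smul_left, hcc₁, horth']
      ring
    have hgx : ⟪x, b₂⟫ = ⟪y, b₂⟫ + u * τ := by
      rw [hxeq, inner_add_left, inner_add_left, real_inner_smul_left, real_inner_smul_left,
        real_inner_smul_left, real_inner_smul_left, hcc₂, horth]
      ring
    have hmin : δ ≤ h x := hx₀min hxS
    rw [hh, le_max_iff] at hmin
    rcases hmin with hcase | hcase
    · have : σ * (a - ⟪x, b₁⟫) = δ - s := by
        rw [hfx, hfy]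
        linear_combination (δ - s) * hσ2
      rw [this] at hcase
      linarith
    · have : τ * (b - ⟪x, b₂⟫) = δ - u := by
        rw [hgx, hgy]
        linear_combination (δ - u) * hτ2
      rw [this] at hcase
      linarith
end
end

section
/- Let S ⊆ ℝ² be a compact set with path-connected boundary satisfying S = closure(interior(S)), and suppose S is θ-biconvex. Then 𝔹_θ(S) = S, i.e., S coincides with its θ-biconvex hull. -/
noncomputable section

open Set Metric MeasureTheory Filter Real
open scoped RealInnerProductSpace Topology symmDiff

lemma inner_b1_b1 (θ : ℝ) : ⟪bvec1 θ, bvec1 θ⟫ = 1 := by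
  simp [-inner_self_eq_norm_sq_to_K, bvec1, PiLp.inner_apply, Fin.sum_univ_two, WithLp.equiv_symm_apply, PiLp.toLp_apply]
  rw [← Real.sin_sq_add_cos_sq θ]; ring

lemma inner_b2_b2 (θ : ℝ) : ⟪bvec2 θ, bvec2 θ⟫ = 1 := by
  simp [-inner_self_eq_norm_sq_to_K, bvec2, PiLp.inner_apply, Fin.sum_univ_two, WithLp.equiv_symm_apply, PiLp.toLp_apply]
  rw [← Real.sin_sq_add_cos_sq θ]; ring

lemma inner_b1_b2 (θ : ℝ) : ⟪bvec1 θ, bvec2 θ⟫ = 0 := by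
  simp [bvec1, bvec2, PiLp.inner_apply, Fin.sum_univ_two, WithLp.equiv_symm_apply, PiLp.toLp_apply]
  ring

lemma decomp_b (θ : ℝ) (w : E2) : w = ⟪w, bvec1 θ⟫ • bvec1 θ + ⟪w, bvec2 θ⟫ • bvec2 θ := by
  have h := Real.sin_sq_add_cos_sq θ
  ext i
  fin_cases i
  · simp [bvec1, bvec2, PiLp.inner_apply, Fin.sum_univ_two, WithLp.equiv_symm_apply, PiLp.toLp_apply]
    linear_combination (-(w 0)) * h
  · simp [bvec1, bvec2, PiLp.inner_apply, Fin.sum_univ_two, WithLp.equiv_symm_apply, PiLp.toLp_apply]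
    linear_combination (-(w 1)) * h

/-- If both coordinates of `z - x` vanish, then `z = x`. -/
lemma eq_of_inner_zero {u v x z : E2} (hdec : ∀ w : E2, w = ⟪w, u⟫ • u + ⟪w, v⟫ • v)
    (h1 : ⟪z - x, u⟫ = 0) (h2 : ⟪z - x, v⟫ = 0) : z = x := by
  have h := hdec (z - x)
  rw [h1, h2] at h
  simp at h
  exact sub_eq_zero.mp h

/-- Segment from a point of a closed set to a point outside meets the frontier
(before reaching the outside point). -/
lemma exists_frontier_segment {S : Set E2} (hS : IsClosed S) {p x : E2}
    (hp : p ∈ S) (hx : x ∉ S) :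
    ∃ c : ℝ, c ∈ Ico (0:ℝ) 1 ∧ p + c • (x - p) ∈ frontier S := by
  set γ : ℝ → E2 := fun t => p + t • (x - p) with hγdef
  have hcont : Continuous γ := by
    apply Continuous.add continuous_const
    exact (continuous_id.smul continuous_const)
  set T : Set ℝ := Icc 0 1 ∩ γ ⁻¹' S with hT
  have h0 : (0:ℝ) ∈ T := ⟨⟨le_refl _, zero_le_one⟩, by simp [γ, hp]⟩
  have hbdd : BddAbove T := ⟨1, fun t ht => ht.1.2⟩
  have hTcl : IsClosed T := isClosed_Icc.inter (hS.preimage hcont)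
  set c := sSup T with hc
  have hcT : c ∈ T := hTcl.csSup_mem ⟨0, h0⟩ hbdd
  have hγ1 : γ 1 = x := by simp [γ]
  have hc1 : c ≠ 1 := fun h => hx (by rw [← hγ1, ← h]; exact hcT.2)
  have hclt : c < 1 := lt_of_le_of_ne hcT.1.2 hc1
  refine ⟨c, ⟨hcT.1.1, hclt⟩, ?_⟩
  rw [frontier_eq_closure_inter_closure, hS.closure_eq]
  refine ⟨hcT.2, ?_⟩
  -- sequence approaching c from above, outside S
  have htend : Tendsto (fun n : ℕ => c + (1 - c) * (1 / (n + 1))) atTop (𝓝 c) := by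
    have := tendsto_one_div_add_atTop_nhds_zero_nat (𝕜 := ℝ)
    have h2 := this.const_mul (1 - c)
    have h3 := h2.const_add c
    simpa using h3
  have htend2 : Tendsto (fun n : ℕ => γ (c + (1 - c) * (1 / (n + 1)))) atTop (𝓝 (γ c)) :=
    (hcont.tendsto c).comp htend
  refine mem_closure_of_tendsto htend2 (Filter.Eventually.of_forall fun n => ?_)
  have hpos : (0:ℝ) < 1 / (n + 1) := by positivity
  have hlt : c < c + (1 - c) * (1 / (n + 1)) := by nlinarith
  have hle1 : c + (1 - c) * (1 / (n + 1)) ≤ 1 := by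
    have : (1:ℝ) / (n + 1) ≤ 1 := by
      rw [div_le_one (by positivity)]; linarith [Nat.cast_nonneg (α := ℝ) n]
    nlinarith
  intro hmem
  have : c + (1 - c) * (1 / (n + 1)) ∈ T := ⟨⟨by linarith [hcT.1.1], hle1⟩, hmem⟩
  exact absurd (le_csSup hbdd this) (not_le.mpr hlt)

lemma mem_quadrant_iff {u v y z : E2} (huu : ⟪u, u⟫ = 1) (hvv : ⟪v, v⟫ = 1)
    (huv : ⟪u, v⟫ = 0) (hdec : ∀ w : E2, w = ⟪w, u⟫ • u + ⟪w, v⟫ • v) :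
    z ∈ Quadrant y u v ↔ 0 < ⟪z - y, u⟫ ∧ 0 < ⟪z - y, v⟫ := by
  have hvu : ⟪v, u⟫ = 0 := by rw [real_inner_comm]; exact huv
  constructor
  · rintro ⟨s, t, hs, ht, rfl⟩
    constructor
    · have h : ⟪y + s • u + t • v - y, u⟫ = s := by
        have he : y + s • u + t • v - y = s • u + t • v := by abel
        rw [he, inner_add_left, real_inner_smul_left, real_inner_smul_left, huu, hvu]; ring
      rw [h]; exact hs
    · have h : ⟪y + s • u + t • v - y, v⟫ = t := by
        have he : y + s • u + t • v - y = s • u + t • v := by abel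
        rw [he, inner_add_left, real_inner_smul_left, real_inner_smul_left, hvv, huv]; ring
      rw [h]; exact ht
  · rintro ⟨h1, h2⟩
    refine ⟨⟪z - y, u⟫, ⟪z - y, v⟫, h1, h2, ?_⟩
    have h := hdec (z - y)
    have h2' : z = y + (⟪z - y, u⟫ • u + ⟪z - y, v⟫ • v) := by rw [← h]; abel
    rw [← add_assoc] at h2'
    exact h2'

/-- Dichotomy: the section of `S` by the line through `x` in direction `v`
lies strictly on one side (w.r.t. the `v`-coordinate). -/
lemma same_side {S : Set E2} {u v x : E2}
    (hdec : ∀ w : E2, w = ⟪w, u⟫ • u + ⟪w, v⟫ • v)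
    (hC : Convex ℝ (lineThru x v ∩ S)) (hx : x ∉ S) :
    (∀ z ∈ S, ⟪z - x, u⟫ = 0 → 0 < ⟪z - x, v⟫) ∨
    (∀ z ∈ S, ⟪z - x, u⟫ = 0 → ⟪z - x, v⟫ < 0) := by
  by_contra hcon
  push_neg at hcon
  obtain ⟨⟨z₁, hz₁S, hz₁u, hz₁v⟩, ⟨z₂, hz₂S, hz₂u, hz₂v⟩⟩ := hcon
  set t₁ := ⟪z₁ - x, v⟫ with ht₁
  set t₂ := ⟪z₂ - x, v⟫ with ht₂
  have ht₁neg : t₁ < 0 := by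
    rcases lt_or_eq_of_le hz₁v with h | h
    · exact h
    · exact absurd (eq_of_inner_zero hdec hz₁u h) (fun he => hx (he ▸ hz₁S))
  have ht₂pos : 0 < t₂ := by
    rcases lt_or_eq_of_le hz₂v with h | h
    · exact h
    · exact absurd (eq_of_inner_zero hdec hz₂u h.symm) (fun he => hx (he ▸ hz₂S))
  have hz₁eq : z₁ = x + t₁ • v := by
    have h := hdec (z₁ - x)
    rw [hz₁u, ← ht₁, zero_smul, zero_add, sub_eq_iff_eq_add'] at h
    exact h
  have hz₂eq : z₂ = x + t₂ • v := by
    have h := hdec (z₂ - x)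
    rw [hz₂u, ← ht₂, zero_smul, zero_add, sub_eq_iff_eq_add'] at h
    exact h
  have hdpos : 0 < t₂ - t₁ := by linarith
  have hdne : t₂ - t₁ ≠ 0 := ne_of_gt hdpos
  set a := t₂ / (t₂ - t₁) with hadef
  set b := -t₁ / (t₂ - t₁) with hbdef
  have ha : 0 ≤ a := by positivity
  have hb : 0 ≤ b := by
    apply div_nonneg (by linarith) (le_of_lt hdpos)
  have hab : a + b = 1 := by rw [hadef, hbdef]; field_simp; ring
  have hmem := hC ⟨⟨t₁, hz₁eq⟩, hz₁S⟩ ⟨⟨t₂, hz₂eq⟩, hz₂S⟩ ha hb hab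
  have hkey : a • z₁ + b • z₂ = x := by
    rw [hz₁eq, hz₂eq]
    have hcoef : a * t₁ + b * t₂ = 0 := by rw [hadef, hbdef]; field_simp; ring
    rw [smul_add, smul_add, smul_smul, smul_smul]
    rw [show a • x + (a * t₁) • v + (b • x + (b * t₂) • v)
        = (a + b) • x + (a * t₁ + b * t₂) • v by
      rw [add_smul, add_smul]; abel]
    rw [hab, hcoef]
    simp
  rw [hkey] at hmem
  exact hx hmem.2

/-- Core contradiction: if the `u`-line and `v`-line sections through `x ∉ S` both lie
strictly on the positive side, yet `S` meets both the closed `(-,-)` and `(+,+)` quadrants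
at `x`, the path-connected frontier yields a contradiction. -/
lemma main_case {S : Set E2} (hS : IsClosed S) (hbd : IsPathConnected (frontier S))
    {u v x : E2} (hdec : ∀ w : E2, w = ⟪w, u⟫ • u + ⟪w, v⟫ • v)
    (hx : x ∉ S)
    (hL : ∀ z ∈ S, ⟪z - x, u⟫ = 0 → 0 < ⟪z - x, v⟫)
    (hM : ∀ z ∈ S, ⟪z - x, v⟫ = 0 → 0 < ⟪z - x, u⟫)
    (hp : ∃ p ∈ S, ⟪p - x, u⟫ ≤ 0 ∧ ⟪p - x, v⟫ ≤ 0)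
    (hq : ∃ q ∈ S, 0 ≤ ⟪q - x, u⟫ ∧ 0 ≤ ⟪q - x, v⟫) : False := by
  have hfrS : frontier S ⊆ S := frontier_subset_iff_isClosed.mpr hS
  obtain ⟨p, hpS, hpu, hpv⟩ := hp
  obtain ⟨q, hqS, hqu, hqv⟩ := hq
  -- strictness for p
  have hpu' : ⟪p - x, u⟫ < 0 := by
    rcases lt_or_eq_of_le hpu with h | h
    · exact h
    · exact absurd (hL p hpS h) (by linarith)
  have hpv' : ⟪p - x, v⟫ < 0 := by
    rcases lt_or_eq_of_le hpv with h | h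
    · exact h
    · exact absurd (hM p hpS h) (by linarith)
  -- frontier point a strictly in the (-,-) quadrant
  obtain ⟨c, hc, ha⟩ := exists_frontier_segment hS hpS hx
  set a := p + c • (x - p) with hadef
  have haxdiff : a - x = (1 - c) • (p - x) := by
    rw [hadef, smul_sub, smul_sub, sub_smul, sub_smul]
    simp only [one_smul]
    abel
  have h1c : 0 < 1 - c := by linarith [hc.2]
  have hau : ⟪a - x, u⟫ < 0 := by
    rw [haxdiff, real_inner_smul_left]
    exact mul_neg_of_pos_of_neg h1c hpu'
  have hav : ⟪a - x, v⟫ < 0 := by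
    rw [haxdiff, real_inner_smul_left]
    exact mul_neg_of_pos_of_neg h1c hpv'
  -- frontier point d in the closed (+,+) quadrant
  obtain ⟨c', hc', hd⟩ := exists_frontier_segment hS hqS hx
  set d := q + c' • (x - q) with hddef
  have hdxdiff : d - x = (1 - c') • (q - x) := by
    rw [hddef, smul_sub, smul_sub, sub_smul, sub_smul]
    simp only [one_smul]
    abel
  have h1c' : 0 ≤ 1 - c' := by linarith [hc'.2]
  have hdu : 0 ≤ ⟪d - x, u⟫ := by
    rw [hdxdiff, real_inner_smul_left]
    exact mul_nonneg h1c' hqu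
  have hdv : 0 ≤ ⟪d - x, v⟫ := by
    rw [hdxdiff, real_inner_smul_left]
    exact mul_nonneg h1c' hqv
  have hdne : ¬(⟪d - x, u⟫ = 0 ∧ ⟪d - x, v⟫ = 0) := by
    rintro ⟨h1, h2⟩
    exact hx ((eq_of_inner_zero hdec h1 h2) ▸ hfrS hd)
  -- path from a to d inside the frontier
  obtain ⟨γ, hγ⟩ := hbd.joinedIn a ha d hd
  set g : ℝ → ℝ := fun t => min (-⟪γ.extend t - x, u⟫) (-⟪γ.extend t - x, v⟫) with hgdef
  have hgcont : Continuous g := by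
    apply Continuous.min
    · exact ((γ.continuous_extend.sub continuous_const).inner continuous_const).neg
    · exact ((γ.continuous_extend.sub continuous_const).inner continuous_const).neg
  have hg0 : 0 < g 0 := by
    have : γ.extend 0 = a := γ.extend_zero
    rw [hgdef]; simp only [this]
    exact lt_min (by linarith) (by linarith)
  have hg1 : g 1 < 0 := by
    have h1 : γ.extend 1 = d := γ.extend_one
    rw [hgdef]; simp only [h1]
    rcases lt_or_eq_of_le hdu with h | h
    · exact lt_of_le_of_lt (min_le_left _ _) (by linarith)
    · rcases lt_or_eq_of_le hdv with h2 | h2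
      · exact lt_of_le_of_lt (min_le_right _ _) (by linarith)
      · exact absurd ⟨h.symm, h2.symm⟩ hdne
  have hivt := intermediate_value_Icc' (zero_le_one) hgcont.continuousOn
  have h0mem : (0:ℝ) ∈ Icc (g 1) (g 0) := ⟨le_of_lt hg1, le_of_lt hg0⟩
  obtain ⟨t, ht01, hgt⟩ := hivt h0mem
  set z := γ.extend t with hzdef
  have hzf : z ∈ frontier S := by
    rw [hzdef, γ.extend_apply ht01]
    exact hγ _
  have hzS : z ∈ S := hfrS hzf
  have hminA : 0 ≤ -⟪z - x, u⟫ := hgt ▸ min_le_left _ _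
  have hminB : 0 ≤ -⟪z - x, v⟫ := hgt ▸ min_le_right _ _
  rcases min_eq_iff.mp hgt with ⟨h, _⟩ | ⟨h, _⟩
  · have hzu : ⟪z - x, u⟫ = 0 := by linarith [neg_eq_zero.mp h]
    have := hL z hzS hzu
    linarith
  · have hzv : ⟪z - x, v⟫ = 0 := by linarith [neg_eq_zero.mp h]
    have := hM z hzS hzv
    linarith

/-- If `x` lies in the biconvex hull of compact `S`, then `S` meets every closed
quadrant at `x`. -/
lemma quadrant_meets {S : Set E2} (hScomp : IsCompact S) {θ : ℝ} {x : E2}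
    (hx : x ∈ BHull θ S) {u v : E2}
    (hmem : ∀ y : E2, Quadrant y u v ∈ QuadrantCones (bvec1 θ) (bvec2 θ) y)
    (huu : ⟪u, u⟫ = 1) (hvv : ⟪v, v⟫ = 1) (huv : ⟪u, v⟫ = 0) :
    ∃ z ∈ S, 0 ≤ ⟪z - x, u⟫ ∧ 0 ≤ ⟪z - x, v⟫ := by
  have hvu : ⟪v, u⟫ = 0 := by rw [real_inner_comm]; exact huv
  set K : ℕ → Set E2 := fun n =>
    S ∩ {z | -(1/(n+1):ℝ) ≤ ⟪z - x, u⟫} ∩ {z | -(1/(n+1):ℝ) ≤ ⟪z - x, v⟫} with hKdef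
  have hinner_cont : ∀ w : E2, Continuous fun z : E2 => ⟪z - x, w⟫ := fun w =>
    (continuous_id.sub continuous_const).inner continuous_const
  have hKclosed : ∀ n, IsClosed (K n) := by
    intro n
    exact ((hScomp.isClosed.inter (isClosed_le continuous_const (hinner_cont u))).inter
      (isClosed_le continuous_const (hinner_cont v)))
  have hKnonempty : ∀ n : ℕ, (K n).Nonempty := by
    intro n
    set ε : ℝ := 1/(n+1) with hεdef
    have hεpos : 0 < ε := by positivity
    set y : E2 := x - ε • u - ε • v with hydef
    set C : Set E2 := Quadrant y u v with hCdef
    have hxC : x ∈ C := by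
      refine ⟨ε, ε, hεpos, hεpos, ?_⟩
      rw [hydef]; abel
    have hCS : (C ∩ S).Nonempty := by
      by_contra hemp
      rw [Set.not_nonempty_iff_eq_empty] at hemp
      have hxc : x ∈ Cᶜ := hx Cᶜ ⟨y, C, hmem y, hemp, rfl⟩
      exact hxc hxC
    obtain ⟨z, ⟨s, t, hs, ht, hzeq⟩, hzS⟩ := hCS
    have hzx : z - x = (s - ε) • u + (t - ε) • v := by
      rw [hzeq, hydef, sub_smul, sub_smul]
      abel
    have hu' : ⟪z - x, u⟫ = s - ε := by
      rw [hzx, inner_add_left, real_inner_smul_left, real_inner_smul_left, huu, hvu]; ring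
    have hv' : ⟪z - x, v⟫ = t - ε := by
      rw [hzx, inner_add_left, real_inner_smul_left, real_inner_smul_left, hvv, huv]; ring
    exact ⟨z, ⟨⟨hzS, by rw [mem_setOf_eq, hu']; linarith⟩, by rw [mem_setOf_eq, hv']; linarith⟩⟩
  have hKanti : ∀ n : ℕ, K (n + 1) ⊆ K n := by
    intro n z hz
    have hle : -(1/((n:ℝ)+1)) ≤ -(1/(((n+1:ℕ):ℝ)+1)) := by
      push_cast
      rw [neg_le_neg_iff]
      apply div_le_div_of_nonneg_left one_pos.le (by positivity)
      linarith
    exact ⟨⟨hz.1.1, le_trans hle hz.1.2⟩, le_trans hle hz.2⟩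
  have hK0comp : IsCompact (K 0) := hScomp.of_isClosed_subset (hKclosed 0)
    (fun z hz => hz.1.1)
  obtain ⟨z, hzint⟩ := IsCompact.nonempty_iInter_of_sequence_nonempty_isCompact_isClosed
    K hKanti hKnonempty hK0comp hKclosed
  have hzmem : ∀ n : ℕ, z ∈ K n := by
    intro n; exact mem_iInter.mp hzint n
  have hzS : z ∈ S := (hzmem 0).1.1
  refine ⟨z, hzS, ?_, ?_⟩
  · by_contra hneg
    push_neg at hneg
    obtain ⟨n, hn⟩ := exists_nat_one_div_lt (show (0:ℝ) < -⟪z - x, u⟫ by linarith)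
    have := (hzmem n).1.2
    rw [mem_setOf_eq] at this
    linarith
  · by_contra hneg
    push_neg at hneg
    obtain ⟨n, hn⟩ := exists_nat_one_div_lt (show (0:ℝ) < -⟪z - x, v⟫ by linarith)
    have := (hzmem n).2
    rw [mem_setOf_eq] at this
    linarith

/-- a compact regular `θ`-biconvex set coincides with its
`θ`-biconvex hull. -/
theorem bhull_eq_self (S : Set E2) (hScomp : IsCompact S)
    (hbd : IsPathConnected (frontier S)) (hreg : S = closure (interior S))
    (θ : ℝ) (hθ : θ ∈ Ico (0 : ℝ) (π / 2)) (hbc : ThetaBiconvex θ S) :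
    BHull θ S = S := by
  apply Subset.antisymm
  · -- BHull ⊆ S
    intro x hx
    by_contra hxS
    have hSclosed : IsClosed S := hScomp.isClosed
    set B1 := bvec1 θ with hB1
    set B2 := bvec2 θ with hB2
    have huu : ⟪B1, B1⟫ = 1 := inner_b1_b1 θ
    have hvv : ⟪B2, B2⟫ = 1 := inner_b2_b2 θ
    have huv : ⟪B1, B2⟫ = 0 := inner_b1_b2 θ
    have hdec : ∀ w : E2, w = ⟪w, B1⟫ • B1 + ⟪w, B2⟫ • B2 := decomp_b θ
    -- memberships of the four cones
    have hm1 : ∀ y : E2, Quadrant y B1 B2 ∈ QuadrantCones B1 B2 y :=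
      fun y => Set.mem_insert _ _
    have hm2 : ∀ y : E2, Quadrant y (-B1) B2 ∈ QuadrantCones B1 B2 y :=
      fun y => Set.mem_insert_of_mem _ (Set.mem_insert _ _)
    have hm3 : ∀ y : E2, Quadrant y B1 (-B2) ∈ QuadrantCones B1 B2 y :=
      fun y => Set.mem_insert_of_mem _ (Set.mem_insert_of_mem _ (Set.mem_insert _ _))
    have hm4 : ∀ y : E2, Quadrant y (-B1) (-B2) ∈ QuadrantCones B1 B2 y :=
      fun y => Set.mem_insert_of_mem _ (Set.mem_insert_of_mem _ (Set.mem_insert_of_mem _ rfl))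
    -- inner products with negated vectors
    have hnn : ⟪-B1, -B1⟫ = (1:ℝ) := by rw [inner_neg_neg]; exact huu
    have hnn2 : ⟪-B2, -B2⟫ = (1:ℝ) := by rw [inner_neg_neg]; exact hvv
    have hn1 : ⟪-B1, B2⟫ = (0:ℝ) := by rw [inner_neg_left, huv, neg_zero]
    have hn2 : ⟪B1, -B2⟫ = (0:ℝ) := by rw [inner_neg_right, huv, neg_zero]
    have hn3 : ⟪-B1, -B2⟫ = (0:ℝ) := by rw [inner_neg_neg]; exact huv
    -- the four closed quadrants at x all meet S
    have hQ1 := quadrant_meets hScomp hx hm1 huu hvv huv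
    have hQ2 := quadrant_meets hScomp hx hm2 hnn hvv hn1
    have hQ3 := quadrant_meets hScomp hx hm3 huu hnn2 hn2
    have hQ4 := quadrant_meets hScomp hx hm4 hnn hnn2 hn3
    -- the two dichotomies
    have hdec' : ∀ w : E2, w = ⟪w, B2⟫ • B2 + ⟪w, B1⟫ • B1 := by
      intro w; rw [add_comm]; exact hdec w
    have hD1 := same_side hdec (hbc x).2 hxS
    have hD2 := same_side hdec' (hbc x).1 hxS
    -- decompositions for negated bases
    have hdecn1 : ∀ w : E2, w = ⟪w, -B1⟫ • (-B1) + ⟪w, B2⟫ • B2 := by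
      intro w
      rw [inner_neg_right, neg_smul, smul_neg, neg_neg]
      exact hdec w
    have hdecn2 : ∀ w : E2, w = ⟪w, B1⟫ • B1 + ⟪w, -B2⟫ • (-B2) := by
      intro w
      rw [inner_neg_right (𝕜 := ℝ) (x := w) (y := B2), neg_smul, smul_neg, neg_neg]
      exact hdec w
    have hdecn3 : ∀ w : E2, w = ⟪w, -B1⟫ • (-B1) + ⟪w, -B2⟫ • (-B2) := by
      intro w
      rw [inner_neg_right (𝕜 := ℝ) (x := w) (y := B1),
        inner_neg_right (𝕜 := ℝ) (x := w) (y := B2), neg_smul, neg_smul,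
        smul_neg, smul_neg, neg_neg, neg_neg]
      exact hdec w
    rcases hD1 with hL1 | hL1 <;> rcases hD2 with hM1 | hM1
    · -- L positive (b2 side), M positive (b1 side): u = B1, v = B2
      refine main_case hSclosed hbd hdec hxS hL1 hM1 ?_ hQ1
      obtain ⟨z, hz, h1, h2⟩ := hQ4
      rw [inner_neg_right] at h1
      rw [inner_neg_right] at h2
      exact ⟨z, hz, by linarith, by linarith⟩
    · -- L positive, M negative: u = -B1, v = B2
      refine main_case hSclosed hbd hdecn1 hxS ?_ ?_ ?_ hQ2
      · intro z hz h
        rw [inner_neg_right, neg_eq_zero] at h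
        exact hL1 z hz h
      · intro z hz h
        rw [inner_neg_right]
        linarith [hM1 z hz h]
      · obtain ⟨z, hz, h1, h2⟩ := hQ3
        rw [inner_neg_right] at h2
        exact ⟨z, hz, by rw [inner_neg_right]; linarith, by linarith⟩
    · -- L negative, M positive: u = B1, v = -B2
      refine main_case hSclosed hbd hdecn2 hxS ?_ ?_ ?_ hQ3
      · intro z hz h
        rw [inner_neg_right]
        linarith [hL1 z hz h]
      · intro z hz h
        rw [inner_neg_right, neg_eq_zero] at h
        exact hM1 z hz h
      · obtain ⟨z, hz, h1, h2⟩ := hQ2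
        rw [inner_neg_right] at h1
        exact ⟨z, hz, by linarith, by rw [inner_neg_right]; linarith⟩
    · -- L negative, M negative: u = -B1, v = -B2
      refine main_case hSclosed hbd hdecn3 hxS ?_ ?_ ?_ hQ4
      · intro z hz h
        rw [inner_neg_right, neg_eq_zero] at h
        rw [inner_neg_right]
        linarith [hL1 z hz h]
      · intro z hz h
        rw [inner_neg_right, neg_eq_zero] at h
        rw [inner_neg_right]
        linarith [hM1 z hz h]
      · obtain ⟨z, hz, h1, h2⟩ := hQ1
        exact ⟨z, hz, by rw [inner_neg_right]; linarith, by rw [inner_neg_right]; linarith⟩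
  · -- S ⊆ BHull
    intro x hxS T hT
    obtain ⟨y, C, hC, hemp, rfl⟩ := hT
    intro hxC
    have : x ∈ C ∩ S := ⟨hxC, hxS⟩
    rw [hemp] at this
    exact this
end
end

section
/- Let S ⊆ ℝ² be a compact set with path-connected boundary, S = closure(interior(S)), that is θ-biconvex, and 𝒳ₙ ⊆ S finite. Then d_H(∂𝔹_θ(S), ∂𝔹_θ(𝒳ₙ)) ≤ 2√2 · d_H(S, 𝒳ₙ), where ∂ denotes topological boundary. -/
noncomputable section

open Set Metric MeasureTheory Filter Real
open scoped RealInnerProductSpace Topology symmDiff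

/-- orthonormal basis pair with expansion property -/
def ONB (a b : E2) : Prop :=
  ⟪a, a⟫ = 1 ∧ ⟪b, b⟫ = 1 ∧ ⟪a, b⟫ = 0 ∧
    ∀ w : E2, w = ⟪w, a⟫ • a + ⟪w, b⟫ • b

lemma inner_E2 (x y : E2) : ⟪x, y⟫ = x 0 * y 0 + x 1 * y 1 := by
  rw [PiLp.inner_apply, Fin.sum_univ_two]; simp [RCLike.inner_apply, mul_comm]

lemma bvec1_apply0 (θ : ℝ) : bvec1 θ 0 = Real.cos θ := rfl
lemma bvec1_apply1 (θ : ℝ) : bvec1 θ 1 = Real.sin θ := rfl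
lemma bvec2_apply0 (θ : ℝ) : bvec2 θ 0 = -Real.sin θ := rfl
lemma bvec2_apply1 (θ : ℝ) : bvec2 θ 1 = Real.cos θ := rfl

lemma onb_bvec (θ : ℝ) : ONB (bvec1 θ) (bvec2 θ) := by
  have pyth := Real.sin_sq_add_cos_sq θ
  refine ⟨?_, ?_, ?_, ?_⟩
  · rw [inner_E2, bvec1_apply0, bvec1_apply1]; nlinarith
  · rw [inner_E2, bvec2_apply0, bvec2_apply1]; nlinarith
  · rw [inner_E2, bvec1_apply0, bvec1_apply1, bvec2_apply0, bvec2_apply1]; ring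
  · intro w
    have h0 : (⟪w, bvec1 θ⟫ • bvec1 θ + ⟪w, bvec2 θ⟫ • bvec2 θ) 0 = w 0 := by
      rw [inner_E2, inner_E2]
      show _ * bvec1 θ 0 + _ * bvec2 θ 0 = w 0
      rw [bvec1_apply0, bvec1_apply1, bvec2_apply0, bvec2_apply1]
      linear_combination w 0 * pyth
    have h1 : (⟪w, bvec1 θ⟫ • bvec1 θ + ⟪w, bvec2 θ⟫ • bvec2 θ) 1 = w 1 := by
      rw [inner_E2, inner_E2]
      show _ * bvec1 θ 1 + _ * bvec2 θ 1 = w 1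
      rw [bvec1_apply0, bvec1_apply1, bvec2_apply0, bvec2_apply1]
      linear_combination w 1 * pyth
    symm
    ext i
    fin_cases i
    · exact h0
    · exact h1

lemma ONB.neg_left {a b : E2} (h : ONB a b) : ONB (-a) b := by
  obtain ⟨h1, h2, h3, h4⟩ := h
  refine ⟨by rw [inner_neg_neg]; exact h1, h2, by rw [inner_neg_left, h3, neg_zero], ?_⟩
  intro w
  rw [inner_neg_right, smul_neg, neg_smul, neg_neg]
  exact h4 w

lemma ONB.neg_right {a b : E2} (h : ONB a b) : ONB a (-b) := by
  obtain ⟨h1, h2, h3, h4⟩ := h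
  refine ⟨h1, by rw [inner_neg_neg]; exact h2, by rw [inner_neg_right, h3, neg_zero], ?_⟩
  intro w
  rw [inner_neg_right, smul_neg, neg_smul, neg_neg]
  exact h4 w

lemma ONB.norm_left {a b : E2} (h : ONB a b) : ‖a‖ = 1 := by
  have := real_inner_self_eq_norm_sq a
  rw [h.1] at this
  nlinarith [norm_nonneg a]

lemma ONB.norm_add {a b : E2} (h : ONB a b) : ‖a + b‖ = Real.sqrt 2 := by
  have hba : ⟪b, a⟫ = 0 := by rw [real_inner_comm]; exact h.2.2.1
  have : ⟪a + b, a + b⟫ = 2 := by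
    rw [inner_add_add_self, h.1, h.2.2.1, h.2.1, hba]; ring
  have h2 := real_inner_self_eq_norm_sq (a + b)
  rw [this] at h2
  have hsq : ‖a + b‖ ^ 2 = 2 := h2.symm
  nlinarith [Real.sq_sqrt (by norm_num : (2:ℝ) ≥ 0), Real.sqrt_nonneg 2, norm_nonneg (a+b)]

lemma mem_quadrant_iff_s12 {a b : E2} (h : ONB a b) {y x : E2} :
    x ∈ Quadrant y a b ↔ 0 < ⟪x - y, a⟫ ∧ 0 < ⟪x - y, b⟫ := by
  obtain ⟨h1, h2, h3, h4⟩ := h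
  constructor
  · rintro ⟨s, t, hs, ht, rfl⟩
    have : y + s • a + t • b - y = s • a + t • b := by abel
    have hba : ⟪b, a⟫ = 0 := by rw [real_inner_comm]; exact h3
    rw [this, inner_add_left, inner_add_left, real_inner_smul_left, real_inner_smul_left,
      real_inner_smul_left, real_inner_smul_left, h1, h2, h3, hba]
    constructor <;> nlinarith
  · rintro ⟨hs, ht⟩
    refine ⟨⟪x - y, a⟫, ⟪x - y, b⟫, hs, ht, ?_⟩
    have := h4 (x - y)
    rw [add_assoc, ← this]
    abel

lemma quadrant_isOpen {a b : E2} (h : ONB a b) (y : E2) : IsOpen (Quadrant y a b) := by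
  have : Quadrant y a b = {x | 0 < ⟪x - y, a⟫} ∩ {x | 0 < ⟪x - y, b⟫} := by
    ext x; rw [mem_quadrant_iff_s12 h]; rfl
  rw [this]
  apply IsOpen.inter
  · exact isOpen_lt continuous_const (Continuous.inner (by fun_prop) (by fun_prop))
  · exact isOpen_lt continuous_const (Continuous.inner (by fun_prop) (by fun_prop))

lemma quadrantCones_cases {θ : ℝ} {C : Set E2} {y : E2}
    (h : C ∈ QuadrantCones (bvec1 θ) (bvec2 θ) y) :
    ∃ a b : E2, ONB a b ∧ C = Quadrant y a b := by
  have hub := onb_bvec θ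
  rcases h with h | h | h | h
  · exact ⟨_, _, hub, h⟩
  · exact ⟨_, _, hub.neg_left, h⟩
  · exact ⟨_, _, hub.neg_right, h⟩
  · exact ⟨_, _, hub.neg_left.neg_right, h⟩

lemma bhull_closed (θ : ℝ) (A : Set E2) : IsClosed (BHull θ A) := by
  apply isClosed_sInter
  rintro T ⟨y, C, hC, -, rfl⟩
  obtain ⟨a, b, hab, rfl⟩ := quadrantCones_cases hC
  exact (quadrant_isOpen hab y).isClosed_compl

lemma subset_bhull (θ : ℝ) (A : Set E2) : A ⊆ BHull θ A := by
  intro x hx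
  rintro T ⟨y, C, hC, hdisj, rfl⟩
  intro hxC
  exact absurd (Set.mem_inter hxC hx) (by rw [hdisj]; exact notMem_empty x)

lemma bhull_mono {θ : ℝ} {A B : Set E2} (h : A ⊆ B) : BHull θ A ⊆ BHull θ B := by
  intro x hx T hT
  obtain ⟨y, C, hC, hdisj, rfl⟩ := hT
  exact hx _ ⟨y, C, hC, Set.eq_empty_of_subset_empty (by rw [← hdisj]; exact inter_subset_inter_right _ h), rfl⟩

/-- A point on a coordinate line section forces membership via biconvexity. -/
lemma line_hit {S : Set E2} {z d : E2} (hconv : Convex ℝ (lineThru z d ∩ S))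
    (hz : z ∉ S) {x₁ x₂ : E2} (h1 : x₁ ∈ S) (h2 : x₂ ∈ S) {c₁ c₂ : ℝ}
    (e1 : x₁ = z + c₁ • d) (e2 : x₂ = z + c₂ • d) (hc1 : c₁ ≤ 0) (hc2 : 0 ≤ c₂) : False := by
  rcases eq_or_lt_of_le hc1 with rfl | hc1'
  · exact hz (by simpa [e1] using h1)
  rcases eq_or_lt_of_le hc2 with rfl | hc2'
  · exact hz (by simpa [e2] using h2)
  set τ : ℝ := c₂ / (c₂ - c₁) with hτdef
  have hden : 0 < c₂ - c₁ := by linarith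
  have hτ0 : 0 ≤ τ := le_of_lt (div_pos hc2' hden)
  have hτ1 : 0 ≤ 1 - τ := by
    have : τ ≤ 1 := by rw [div_le_one hden]; linarith
    linarith
  have hne : c₂ - c₁ ≠ 0 := ne_of_gt hden
  have hscal : τ * c₁ + (1 - τ) * c₂ = 0 := by
    rw [hτdef]
    field_simp
    ring
  have hcombo : τ • x₁ + (1 - τ) • x₂ = z + (τ * c₁ + (1 - τ) * c₂) • d := by
    rw [e1, e2]
    module
  rw [hscal, zero_smul, add_zero] at hcombo
  have hmem : τ • x₁ + (1 - τ) • x₂ ∈ lineThru z d ∩ S :=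
    hconv ⟨⟨c₁, e1⟩, h1⟩ ⟨⟨c₂, e2⟩, h2⟩ hτ0 hτ1 (by ring)
  rw [hcombo] at hmem
  exact hz hmem.2

/-- expansion when one coordinate vanishes -/
lemma expand_line {a b : E2} (hab : ONB a b) {z x : E2} (h : ⟪x - z, b⟫ = 0) :
    x = z + ⟪x - z, a⟫ • a := by
  have := hab.2.2.2 (x - z)
  rw [h, zero_smul, add_zero] at this
  rw [← this]
  abel

/-- sign dichotomy for a coordinate line through `z` -/
lemma sign_dichotomy {S : Set E2} {z d a b : E2} (hab : ONB a b)
    (hconv : Convex ℝ (lineThru z d ∩ S)) (hd : d = a ∨ d = -a) (hz : z ∉ S) :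
    ∃ σ : ℝ, (σ = 1 ∨ σ = -1) ∧ ∀ x ∈ S, ⟪x - z, b⟫ = 0 → 0 < σ * ⟪x - z, a⟫ := by
  by_cases hcase : ∀ x ∈ S, ⟪x - z, b⟫ = 0 → 0 < ⟪x - z, a⟫
  · exact ⟨1, Or.inl rfl, by simpa using hcase⟩
  · push_neg at hcase
    obtain ⟨x₁, hx₁S, hx₁b, hx₁a⟩ := hcase
    refine ⟨-1, Or.inr rfl, ?_⟩
    intro x hxS hxb
    by_contra hpos
    push_neg at hpos
    have hge : 0 ≤ ⟪x - z, a⟫ := by nlinarith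
    -- expansions along d
    have e1 : x₁ = z + ⟪x₁ - z, a⟫ • a := expand_line hab hx₁b
    have e2 : x = z + ⟪x - z, a⟫ • a := expand_line hab hxb
    rcases hd with rfl | rfl
    · exact line_hit hconv hz hx₁S hxS e1 e2 hx₁a hge
    · refine line_hit hconv hz hxS hx₁S (c₁ := -⟪x - z, a⟫) (c₂ := -⟪x₁ - z, a⟫)
        ?_ ?_ (by linarith) (by linarith)
      · rw [neg_smul_neg]; exact e2
      · rw [neg_smul_neg]; exact e1

/-- From a strict quadrant-avoidance with unit signs, build an open quadrant cone
containing `z` and disjoint from compact `S`. -/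
lemma build_cone {θ : ℝ} {S : Set E2} (hcomp : IsCompact S) (hSne : S.Nonempty)
    {z : E2} {τ₁ τ₂ : ℝ} (h1 : τ₁ = 1 ∨ τ₁ = -1) (h2 : τ₂ = 1 ∨ τ₂ = -1)
    (hS : ∀ x ∈ S, τ₁ * ⟪x - z, bvec1 θ⟫ < 0 ∨ τ₂ * ⟪x - z, bvec2 θ⟫ < 0) :
    ∃ y C, C ∈ QuadrantCones (bvec1 θ) (bvec2 θ) y ∧ C ∩ S = ∅ ∧ z ∈ C := by
  obtain ⟨a, ha⟩ : ∃ a : E2, a = τ₁ • bvec1 θ := ⟨_, rfl⟩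
  obtain ⟨b, hb⟩ : ∃ b : E2, b = τ₂ • bvec2 θ := ⟨_, rfl⟩
  have hONB : ONB a b := by
    rw [ha, hb]
    have h := onb_bvec θ
    rcases h1 with rfl | rfl <;> rcases h2 with rfl | rfl <;>
      simp only [one_smul, neg_one_smul] <;>
      first
        | exact h
        | exact h.neg_left
        | exact h.neg_right
        | exact h.neg_left.neg_right
  have hba : ⟪b, a⟫ = 0 := by rw [real_inner_comm]; exact hONB.2.2.1
  -- uniform gap via compactness
  have hcont : Continuous fun x : E2 => min (τ₁ * ⟪x - z, bvec1 θ⟫) (τ₂ * ⟪x - z, bvec2 θ⟫) :=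
    (continuous_const.mul ((continuous_id.sub continuous_const).inner continuous_const)).min
      (continuous_const.mul ((continuous_id.sub continuous_const).inner continuous_const))
  obtain ⟨x₀, hx₀S, hmax⟩ := hcomp.exists_isMaxOn hSne hcont.continuousOn
  set δ : ℝ := -(min (τ₁ * ⟪x₀ - z, bvec1 θ⟫) (τ₂ * ⟪x₀ - z, bvec2 θ⟫)) / 2 with hδ
  have hδpos : 0 < δ := by
    rcases hS x₀ hx₀S with h | h
    · have : min (τ₁ * ⟪x₀ - z, bvec1 θ⟫) (τ₂ * ⟪x₀ - z, bvec2 θ⟫) < 0 :=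
        lt_of_le_of_lt (min_le_left _ _) h
      rw [hδ]; linarith
    · have : min (τ₁ * ⟪x₀ - z, bvec1 θ⟫) (τ₂ * ⟪x₀ - z, bvec2 θ⟫) < 0 :=
        lt_of_le_of_lt (min_le_right _ _) h
      rw [hδ]; linarith
  have hgap : ∀ x ∈ S, τ₁ * ⟪x - z, bvec1 θ⟫ ≤ -(2*δ) ∨ τ₂ * ⟪x - z, bvec2 θ⟫ ≤ -(2*δ) := by
    intro x hx
    have hmx := hmax hx
    simp only [mem_setOf_eq] at hmx
    have h2δ : min (τ₁ * ⟪x - z, bvec1 θ⟫) (τ₂ * ⟪x - z, bvec2 θ⟫) ≤ -(2*δ) := by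
      rw [hδ] at *; linarith
    rcases le_total (τ₁ * ⟪x - z, bvec1 θ⟫) (τ₂ * ⟪x - z, bvec2 θ⟫) with hm | hm
    · left; rwa [min_eq_left hm] at h2δ
    · right; rwa [min_eq_right hm] at h2δ
  obtain ⟨y₀, hy₀⟩ : ∃ y₀ : E2, y₀ = z - δ • a - δ • b := ⟨_, rfl⟩
  refine ⟨y₀, Quadrant y₀ a b, ?_, ?_, ?_⟩
  · rw [ha, hb]
    rcases h1 with rfl | rfl <;> rcases h2 with rfl | rfl <;>
      simp [QuadrantCones, one_smul, neg_one_smul]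
  · rw [eq_empty_iff_forall_notMem]
    rintro x ⟨hxC, hxS⟩
    rw [mem_quadrant_iff_s12 hONB] at hxC
    have hxa : ⟪x - y₀, a⟫ = ⟪x - z, a⟫ + δ := by
      have hxy : x - y₀ = (x - z) + δ • a + δ • b := by rw [hy₀]; module
      rw [hxy, inner_add_left, inner_add_left, real_inner_smul_left, real_inner_smul_left,
        hONB.1, hba]
      ring
    have hxb : ⟪x - y₀, b⟫ = ⟪x - z, b⟫ + δ := by
      have hxy : x - y₀ = (x - z) + δ • a + δ • b := by rw [hy₀]; module
      rw [hxy, inner_add_left, inner_add_left, real_inner_smul_left, real_inner_smul_left,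
        hONB.2.1, hONB.2.2.1]
      ring
    have hia : ⟪x - z, a⟫ = τ₁ * ⟪x - z, bvec1 θ⟫ := by
      rw [ha, real_inner_smul_right]
    have hib : ⟪x - z, b⟫ = τ₂ * ⟪x - z, bvec2 θ⟫ := by
      rw [hb, real_inner_smul_right]
    rcases hgap x hxS with h | h
    · rw [hxa, hia] at hxC; linarith [hxC.1]
    · rw [hxb, hib] at hxC; linarith [hxC.2]
  · rw [mem_quadrant_iff_s12 hONB]
    have hza : z - y₀ = δ • a + δ • b := by rw [hy₀]; module
    constructor
    · rw [hza, inner_add_left, real_inner_smul_left, real_inner_smul_left, hONB.1, hba]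
      linarith
    · rw [hza, inner_add_left, real_inner_smul_left, real_inner_smul_left, hONB.2.1,
        hONB.2.2.1]
      linarith

lemma exists_cone_of_not_mem {θ : ℝ} {S : Set E2} (hconn : IsPreconnected S)
    (hcomp : IsCompact S) (hbc : ThetaBiconvex θ S) {z : E2} (hz : z ∉ S) :
    ∃ y C, C ∈ QuadrantCones (bvec1 θ) (bvec2 θ) y ∧ C ∩ S = ∅ ∧ z ∈ C := by
  rcases S.eq_empty_or_nonempty with rfl | hSne
  · refine ⟨z - bvec1 θ - bvec2 θ, Quadrant (z - bvec1 θ - bvec2 θ) (bvec1 θ) (bvec2 θ),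
      Set.mem_insert _ _, by simp, ⟨1, 1, one_pos, one_pos, by module⟩⟩
  have hub := onb_bvec θ
  have hvu : ONB (bvec2 θ) (bvec1 θ) := by
    obtain ⟨h1, h2, h3, h4⟩ := hub
    refine ⟨h2, h1, by rwa [real_inner_comm], fun w => ?_⟩
    rw [add_comm]; exact h4 w
  -- sign dichotomies along the two coordinate lines through z
  obtain ⟨σ₁, hσ₁, hP₁⟩ := sign_dichotomy hub (hbc z).1 (Or.inl rfl) hz
  obtain ⟨σ₂, hσ₂, hP₂⟩ := sign_dichotomy hvu (hbc z).2 (Or.inl rfl) hz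
  -- g/h abbreviations implicit; main disjunction via connectedness
  have key : (∀ x ∈ S, -σ₁ * ⟪x - z, bvec1 θ⟫ < 0 ∨ -σ₂ * ⟪x - z, bvec2 θ⟫ < 0) ∨
      (∀ x ∈ S, σ₁ * ⟪x - z, bvec1 θ⟫ < 0 ∨ σ₂ * ⟪x - z, bvec2 θ⟫ < 0) := by
    by_contra hcon
    push_neg at hcon
    obtain ⟨⟨p, hpS, hp1n, hp2n⟩, ⟨q, hqS, hq1', hq2'⟩⟩ := hcon
    have hp1 : σ₁ * ⟪p - z, bvec1 θ⟫ ≤ 0 := by linarith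
    have hp2 : σ₂ * ⟪p - z, bvec2 θ⟫ ≤ 0 := by linarith
    -- p is strictly inside the "negative" quadrant
    have hσ₁sq : σ₁ * σ₁ = 1 := by rcases hσ₁ with rfl | rfl <;> norm_num
    have hσ₂sq : σ₂ * σ₂ = 1 := by rcases hσ₂ with rfl | rfl <;> norm_num
    have hp1' : σ₁ * ⟪p - z, bvec1 θ⟫ < 0 := by
      rcases lt_or_eq_of_le hp1 with h | h
      · exact h
      · -- σ₁ * g p = 0 → g p = 0 → σ₂ * h p > 0, contradiction with hp2
        exfalso
        have hg : ⟪p - z, bvec1 θ⟫ = 0 := by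
          rcases hσ₁ with rfl | rfl
          · linarith
          · linarith
        have := hP₂ p hpS hg
        linarith
    have hp2' : σ₂ * ⟪p - z, bvec2 θ⟫ < 0 := by
      rcases lt_or_eq_of_le hp2 with h | h
      · exact h
      · exfalso
        have hh : ⟪p - z, bvec2 θ⟫ = 0 := by
          rcases hσ₂ with rfl | rfl
          · linarith
          · linarith
        have := hP₁ p hpS hh
        linarith
    -- connectedness separation
    set U₁ : Set E2 := {x | σ₁ * ⟪x - z, bvec1 θ⟫ < 0 ∧ σ₂ * ⟪x - z, bvec2 θ⟫ < 0} with hU₁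
    set U₂ : Set E2 := {x | 0 < σ₁ * ⟪x - z, bvec1 θ⟫ ∨ 0 < σ₂ * ⟪x - z, bvec2 θ⟫} with hU₂
    have hcont1 : Continuous fun x : E2 => σ₁ * ⟪x - z, bvec1 θ⟫ :=
      continuous_const.mul ((continuous_id.sub continuous_const).inner continuous_const)
    have hcont2 : Continuous fun x : E2 => σ₂ * ⟪x - z, bvec2 θ⟫ :=
      continuous_const.mul ((continuous_id.sub continuous_const).inner continuous_const)
    have hU₁open : IsOpen U₁ :=
      (isOpen_lt hcont1 continuous_const).inter (isOpen_lt hcont2 continuous_const)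
    have hU₂open : IsOpen U₂ :=
      (isOpen_lt continuous_const hcont1).union (isOpen_lt continuous_const hcont2)
    have hcover : S ⊆ U₁ ∪ U₂ := by
      intro x hxS
      by_cases hx1 : σ₁ * ⟪x - z, bvec1 θ⟫ < 0
      · by_cases hx2 : σ₂ * ⟪x - z, bvec2 θ⟫ < 0
        · exact Or.inl ⟨hx1, hx2⟩
        · push_neg at hx2
          rcases lt_or_eq_of_le hx2 with h | h
          · exact Or.inr (Or.inr h)
          · -- σ₂ h x = 0 → h x = 0 → σ₁ g x > 0 contradiction with hx1
            exfalso
            have hh : ⟪x - z, bvec2 θ⟫ = 0 := by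
              rcases hσ₂ with rfl | rfl
              · linarith
              · linarith
            have := hP₁ x hxS hh
            linarith
      · push_neg at hx1
        rcases lt_or_eq_of_le hx1 with h | h
        · exact Or.inr (Or.inl h)
        · have hg : ⟪x - z, bvec1 θ⟫ = 0 := by
            rcases hσ₁ with rfl | rfl
            · linarith
            · linarith
          exact Or.inr (Or.inr (hP₂ x hxS hg))
    have hq₂mem : q ∈ U₂ := by
      rcases lt_or_eq_of_le hq1' with h | h
      · exact Or.inl h
      · have hg : ⟪q - z, bvec1 θ⟫ = 0 := by
          rcases hσ₁ with rfl | rfl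
          · linarith
          · linarith
        exact Or.inr (hP₂ q hqS hg)
    obtain ⟨w, -, hw1, hw2⟩ := hconn U₁ U₂ hU₁open hU₂open hcover ⟨p, hpS, hp1', hp2'⟩ ⟨q, hqS, hq₂mem⟩
    rw [hU₁] at hw1
    rw [hU₂] at hw2
    obtain ⟨hwa, hwb⟩ := hw1
    rcases hw2 with h | h
    · linarith
    · linarith
  rcases key with h | h
  · exact build_cone hcomp hSne (by rcases hσ₁ with rfl | rfl <;> norm_num)
      (by rcases hσ₂ with rfl | rfl <;> norm_num) h
  · exact build_cone hcomp hSne hσ₁ hσ₂ h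

lemma bhull_subset_self {θ : ℝ} {S : Set E2} (hconn : IsPreconnected S)
    (hcomp : IsCompact S) (hbc : ThetaBiconvex θ S) : BHull θ S ⊆ S := by
  intro z hzB
  by_contra hz
  obtain ⟨y, C, hC, hdisj, hzC⟩ := exists_cone_of_not_mem hconn hcomp hbc hz
  exact (hzB Cᶜ ⟨y, C, hC, hdisj, rfl⟩) hzC

lemma preconnected_of_frontier {S : Set E2} (hcomp : IsCompact S)
    (hbd : IsPathConnected (frontier S)) : IsPreconnected S := by
  rw [isPreconnected_iff_subset_of_fully_disjoint_closed hcomp.isClosed]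
  intro u v hu hv hcover hdisj
  set U : Set E2 := S ∩ u with hU
  set V : Set E2 := S ∩ v with hV
  by_cases hUe : U = ∅
  · right
    intro x hx
    rcases hcover hx with h | h
    · exact absurd (show x ∈ U from Set.mem_inter hx h) (by rw [hUe]; exact notMem_empty x)
    · exact h
  by_cases hVe : V = ∅
  · left
    intro x hx
    rcases hcover hx with h | h
    · exact h
    · exact absurd (show x ∈ V from Set.mem_inter hx h) (by rw [hVe]; exact notMem_empty x)
  exfalso
  have hUc : IsClosed U := hcomp.isClosed.inter hu
  have hVc : IsClosed V := hcomp.isClosed.inter hv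
  have hUV : U ∪ V = S := by
    apply Set.eq_of_subset_of_subset
    · exact Set.union_subset (inter_subset_left) (inter_subset_left)
    · intro x hx
      rcases hcover hx with h | h
      · exact Or.inl ⟨hx, h⟩
      · exact Or.inr ⟨hx, h⟩
  have hdUV : Disjoint U V := hdisj.mono inter_subset_right inter_subset_right
  -- frontiers of the pieces sit inside the frontier of S
  have key : ∀ A B : Set E2, IsClosed A → IsClosed B → A ∪ B = S → Disjoint A B →
      frontier A ⊆ frontier S := by
    intro A B hA hB hAB hd x hx
    rw [hA.frontier_eq] at hx
    obtain ⟨hxA, hxnI⟩ := hx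
    have hxS : x ∈ S := by rw [← hAB]; exact Or.inl hxA
    rw [hcomp.isClosed.frontier_eq]
    refine ⟨hxS, fun hxIS => hxnI ?_⟩
    rw [mem_interior_iff_mem_nhds] at hxIS ⊢
    have hxB : x ∉ B := fun hxB => (hd.ne_of_mem hxA hxB) rfl
    have hBc : Bᶜ ∈ 𝓝 x := hB.isOpen_compl.mem_nhds hxB
    filter_upwards [hxIS, hBc] with w hwS hwB
    rw [← hAB] at hwS
    exact hwS.resolve_right hwB
  have hfU : frontier U ⊆ frontier S := key U V hUc hVc hUV hdUV
  have hfV : frontier V ⊆ frontier S := key V U hVc hUc (by rw [union_comm]; exact hUV) hdUV.symm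
  have hfUne : (frontier U).Nonempty := by
    rw [nonempty_frontier_iff]
    refine ⟨nonempty_iff_ne_empty.mpr hUe, fun hUuniv => ?_⟩
    have : V = ∅ := by
      rw [← Set.subset_empty_iff]
      intro x hx
      exact absurd rfl (hdUV.ne_of_mem (by rw [hUuniv]; trivial) hx)
    exact hVe this
  have hfVne : (frontier V).Nonempty := by
    rw [nonempty_frontier_iff]
    refine ⟨nonempty_iff_ne_empty.mpr hVe, fun hVuniv => ?_⟩
    have : U = ∅ := by
      rw [← Set.subset_empty_iff]
      intro x hx
      exact absurd rfl (hdUV.ne_of_mem hx (by rw [hVuniv]; trivial))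
    exact hUe this
  -- frontier S is preconnected but split by U, V
  have hFpc : IsPreconnected (frontier S) := hbd.isConnected.isPreconnected
  have hFsub : frontier S ⊆ U ∪ V := by
    rw [hUV]
    exact hcomp.isClosed.frontier_subset
  rcases (isPreconnected_iff_subset_of_fully_disjoint_closed isClosed_frontier).mp hFpc U V
      hUc hVc hFsub hdUV with h | h
  · obtain ⟨x, hx⟩ := hfVne
    have hxV : x ∈ V := frontier_subset_closure.trans hVc.closure_subset.subset hx
    exact (hdUV.ne_of_mem (h (hfV hx)) hxV) rfl
  · obtain ⟨x, hx⟩ := hfUne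
    have hxU : x ∈ U := frontier_subset_closure.trans hUc.closure_subset.subset hx
    exact (hdUV.ne_of_mem hxU (h (hfU hx))) rfl

/-- crossing a frontier along a segment -/
lemma cross_frontier {s : Set E2} {w m : E2} (hw : w ∉ s) (hm : m ∈ s) :
    ∃ q ∈ frontier s, dist w q ≤ dist w m := by
  by_cases hwf : w ∈ frontier s
  · exact ⟨w, hwf, by simp [dist_nonneg]⟩
  by_cases hmf : m ∈ frontier s
  · exact ⟨m, hmf, le_refl _⟩
  have hmint : m ∈ interior s := by
    have : m ∈ interior s ∪ frontier s := by
      rw [← closure_eq_interior_union_frontier]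
      exact subset_closure hm
    exact this.resolve_right hmf
  have hwext : w ∈ (closure s)ᶜ := by
    intro hwc
    rcases (by rw [← closure_eq_interior_union_frontier]; exact hwc :
        w ∈ interior s ∪ frontier s) with h | h
    · exact hw (interior_subset h)
    · exact hwf h
  have hcross : (segment ℝ w m ∩ frontier s).Nonempty := by
    by_contra hno
    rw [Set.not_nonempty_iff_eq_empty] at hno
    have hcover : segment ℝ w m ⊆ interior s ∪ (closure s)ᶜ := by
      intro t ht
      have htf : t ∉ frontier s := fun h => by
        have : t ∈ segment ℝ w m ∩ frontier s := ⟨ht, h⟩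
        rw [hno] at this
        exact notMem_empty t this
      by_cases htc : t ∈ closure s
      · left
        rcases (by rw [← closure_eq_interior_union_frontier]; exact htc :
            t ∈ interior s ∪ frontier s) with h | h
        · exact h
        · exact absurd h htf
      · exact Or.inr htc
    obtain ⟨t, -, ht1, ht2⟩ := (convex_segment w m).isPreconnected _ _ isOpen_interior
      (isClosed_closure.isOpen_compl) hcover
      ⟨m, right_mem_segment ℝ w m, hmint⟩ ⟨w, left_mem_segment ℝ w m, hwext⟩
    exact ht2 (subset_closure (interior_subset ht1))
  obtain ⟨q, hqseg, hqf⟩ := hcross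
  refine ⟨q, hqf, ?_⟩
  have : q ∈ closedBall w (dist w m) := by
    apply (convex_closedBall w (dist w m)).segment_subset
      (mem_closedBall_self dist_nonneg) (by rw [mem_closedBall, dist_comm]) hqseg
  rw [mem_closedBall, dist_comm] at this
  exact this

/-- Hausdorff distance bound between the boundaries of the
biconvex hulls of the sample and of `S`. -/
theorem bhull_boundary_bound (S : Set E2) (hScomp : IsCompact S)
    (hbd : IsPathConnected (frontier S)) (hreg : S = closure (interior S))
    (θ : ℝ) (hθ : θ ∈ Ico (0 : ℝ) (π / 2)) (hbc : ThetaBiconvex θ S)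
    (X : Set E2) (hXS : X ⊆ S) (hXfin : X.Finite) (hXne : X.Nonempty) :
    hausdorffDist (frontier (BHull θ S)) (frontier (BHull θ X)) ≤
      2 * Real.sqrt 2 * hausdorffDist S X := by
  have hSne : S.Nonempty := hXne.mono hXS
  have hXcomp : IsCompact X := hXfin.isCompact
  have hXcl : IsClosed X := hXfin.isClosed
  have hconn : IsPreconnected S := preconnected_of_frontier hScomp hbd
  have hBS : BHull θ S = S :=
    Set.Subset.antisymm (bhull_subset_self hconn hScomp hbc) (subset_bhull θ S)
  have hBXS : BHull θ X ⊆ S := (bhull_mono hXS).trans hBS.subset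
  have hBXcl : IsClosed (BHull θ X) := bhull_closed θ X
  have hne : EMetric.hausdorffEdist S X ≠ ⊤ :=
    hausdorffEdist_ne_top_of_nonempty_of_bounded hSne hXne hScomp.isBounded hXcomp.isBounded
  set ε := hausdorffDist S X with hε
  have hε0 : 0 ≤ ε := hausdorffDist_nonneg
  have hs2 : (1:ℝ) ≤ Real.sqrt 2 := by
    nlinarith [Real.sq_sqrt (by norm_num : (0:ℝ) ≤ 2), Real.sqrt_nonneg 2]
  rcases eq_or_lt_of_le hε0 with hε00 | hεpos
  · -- degenerate case : `S = X`
    have hed : EMetric.hausdorffEdist S X = 0 := by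
      have h1 : ε = 0 := hε00.symm
      rw [hε, hausdorffDist] at h1
      rcases ENNReal.toReal_eq_zero_iff _ |>.mp h1 with h | h
      · exact h
      · exact absurd h hne
    have hSX : S = X := by
      have := EMetric.hausdorffEdist_zero_iff_closure_eq_closure.mp hed
      rwa [hScomp.isClosed.closure_eq, hXcl.closure_eq] at this
    rw [hSX, hausdorffDist_self_zero]
    positivity
  -- main case
  have hkey : ∀ z ∈ S, ∃ p ∈ X, dist z p ≤ ε := by
    intro z hz
    obtain ⟨p, hpX, hdp⟩ := hXcomp.exists_infDist_eq_dist hXne z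
    exact ⟨p, hpX, by rw [← hdp]; exact infDist_le_hausdorffDist_of_mem hz hne⟩
  have hr0 : (0:ℝ) ≤ 2 * Real.sqrt 2 * ε := by positivity
  apply hausdorffDist_le_of_mem_dist hr0
  · -- from ∂(BHull S) = ∂S to ∂(BHull X)
    intro x hx
    rw [hBS] at hx
    have hxS : x ∈ S := hScomp.isClosed.frontier_subset hx
    by_cases hxB : x ∈ BHull θ X
    · refine ⟨x, ?_, by simpa using hr0⟩
      refine ⟨subset_closure hxB, fun hxI => ?_⟩
      exact hx.2 (interior_mono hBXS hxI)
    · obtain ⟨p, hpX, hdp⟩ := hkey x hxS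
      obtain ⟨q, hqf, hdq⟩ := cross_frontier hxB (subset_bhull θ X hpX)
      refine ⟨q, hqf, hdq.trans (hdp.trans ?_)⟩
      nlinarith
  · -- from ∂(BHull X) to ∂S
    intro x hx
    have hxB : x ∈ BHull θ X := hBXcl.frontier_subset hx
    have hxS : x ∈ S := hBXS hxB
    have hxnI : x ∉ interior (BHull θ X) := hx.2
    have hδ : 0 < Real.sqrt 2 * ε := by positivity
    obtain ⟨y, hyd, hyB⟩ : ∃ y, dist x y < Real.sqrt 2 * ε ∧ y ∉ BHull θ X := by
      by_contra hcon
      push_neg at hcon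
      apply hxnI
      rw [mem_interior_iff_mem_nhds]
      filter_upwards [Metric.ball_mem_nhds x hδ] with w hw
      exact hcon w (by rwa [mem_ball'] at hw)
    obtain ⟨y₀, C, hC, hCX, hyC⟩ :
        ∃ y₀ C, C ∈ QuadrantCones (bvec1 θ) (bvec2 θ) y₀ ∧ C ∩ X = ∅ ∧ y ∈ C := by
      by_contra hcon
      push_neg at hcon
      apply hyB
      rintro T ⟨y₀, C, hC, hd, rfl⟩
      intro hyC
      exact (hcon y₀ C hC hd) hyC
    obtain ⟨a, b, hab, rfl⟩ := quadrantCones_cases hC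
    rw [mem_quadrant_iff_s12 hab] at hyC
    have hba : ⟪b, a⟫ = 0 := by rw [real_inner_comm]; exact hab.2.2.1
    obtain ⟨y', hy'⟩ : ∃ y' : E2, y' = y + ε • (a + b) := ⟨_, rfl⟩
    have hy'S : y' ∉ S := by
      intro hy'Smem
      obtain ⟨p, hpX, hdp⟩ := hkey y' hy'Smem
      have hnp : ‖p - y'‖ ≤ ε := by
        rw [← dist_eq_norm, dist_comm]
        exact hdp
      have hpa : -ε ≤ ⟪p - y', a⟫ := by
        have h1 := abs_real_inner_le_norm (p - y') a
        rw [hab.norm_left, mul_one] at h1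
        have := abs_le.mp (h1.trans hnp)
        linarith [this.1]
      have hpb : -ε ≤ ⟪p - y', b⟫ := by
        have h1 := abs_real_inner_le_norm (p - y') b
        have hnb : ‖b‖ = 1 := by
          have := real_inner_self_eq_norm_sq b
          rw [hab.2.1] at this
          nlinarith [norm_nonneg b]
        rw [hnb, mul_one] at h1
        have := abs_le.mp (h1.trans hnp)
        linarith [this.1]
      have hsplit_a : ⟪p - y₀, a⟫ = ⟪p - y', a⟫ + ⟪y - y₀, a⟫ + ε := by
        have hdecomp : p - y₀ = (p - y') + (y - y₀) + ε • a + ε • b := by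
          rw [hy']; module
        rw [hdecomp, inner_add_left, inner_add_left, inner_add_left,
          real_inner_smul_left, real_inner_smul_left, hab.1, hba]
        ring
      have hsplit_b : ⟪p - y₀, b⟫ = ⟪p - y', b⟫ + ⟪y - y₀, b⟫ + ε := by
        have hdecomp : p - y₀ = (p - y') + (y - y₀) + ε • a + ε • b := by
          rw [hy']; module
        rw [hdecomp, inner_add_left, inner_add_left, inner_add_left,
          real_inner_smul_left, real_inner_smul_left, hab.2.1, hab.2.2.1]
        ring
      have hpC : p ∈ Quadrant y₀ a b := by
        rw [mem_quadrant_iff_s12 hab]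
        constructor
        · rw [hsplit_a]; linarith [hyC.1]
        · rw [hsplit_b]; linarith [hyC.2]
      have : p ∈ Quadrant y₀ a b ∩ X := ⟨hpC, hpX⟩
      rw [hCX] at this
      exact notMem_empty p this
    -- now cross the frontier of S between x and y'
    have hxc : x ∉ Sᶜ := fun h => h hxS
    have hy'c : y' ∈ Sᶜ := hy'S
    obtain ⟨q, hqf, hdq⟩ := cross_frontier hxc hy'c
    rw [frontier_compl] at hqf
    refine ⟨q, by rw [hBS]; exact hqf, ?_⟩
    have hdyy' : dist y y' = Real.sqrt 2 * ε := by
      rw [hy', dist_eq_norm]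
      have : y - (y + ε • (a + b)) = -(ε • (a+b)) := by module
      rw [this, norm_neg, norm_smul, hab.norm_add, Real.norm_eq_abs, abs_of_nonneg hε0]
      ring
    have : dist x y' ≤ dist x y + dist y y' := dist_triangle x y y'
    rw [hdyy'] at this
    calc dist x q ≤ dist x y' := hdq
      _ ≤ dist x y + Real.sqrt 2 * ε := this
      _ ≤ Real.sqrt 2 * ε + Real.sqrt 2 * ε := by linarith
      _ = 2 * Real.sqrt 2 * ε := by ring
end
end
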